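/- arXiv:2209.03590 — 11 statements merged into one kernel-verified Lean document; each statement's English description precedes it below -/
import Mathlib

section
/- For every positive integer n, the n-dimensional volume (surface area) of the unit sphere S^n in ℝ^{n+1} satisfies vol(S^n) = 2 · ∏_{j=0}^{n-1} Z(-j), where Z(s) = π · 2^s · ζ_ℤ(s/2) and ζ_ℤ(s) = Γ(1/2 - s)/(4^s √π Γ(1 - s)). -/
open Real Complex

noncomputable def zetaZ (s : ℂ) : ℂ :=
  Complex.Gamma (1/2 - s) / ((4:ℂ) ^ s * (Real.sqrt Real.pi : ℂ) * Complex.Gamma (1 - s))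

noncomputable def Zfun (s : ℂ) : ℂ := (Real.pi : ℂ) * (2:ℂ) ^ s * zetaZ (s / 2)

noncomputable def sphereVolume (n : ℕ) : ℝ :=
  2 * Real.pi ^ (((n:ℝ) + 1) / 2) / Real.Gamma (((n:ℝ) + 1) / 2)

lemma real4 (j : ℕ) : (4:ℝ) ^ (-(j:ℝ)/2) = ((2:ℝ)^j)⁻¹ := by
  rw [show (4:ℝ) = 2 ^ (2:ℝ) by norm_num [Real.rpow_two],
    ← Real.rpow_mul (by norm_num), ← Real.rpow_natCast 2 j, ← Real.rpow_neg (by norm_num)]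
  ring_nf

lemma ZA (j : ℕ) : Zfun (-(j:ℂ)) =
    ((Real.sqrt Real.pi * Real.Gamma (((j:ℝ)+1)/2) / Real.Gamma (((j:ℝ)+2)/2) : ℝ) : ℂ) := by
  have h4 : (4:ℂ) ^ (-(j:ℂ)/2) = ((((2:ℝ)^j)⁻¹ : ℝ) : ℂ) := by
    have h1 : (-(j:ℂ)/2) = ((-(j:ℝ)/2 : ℝ) : ℂ) := by push_cast; ring
    rw [show (4:ℂ) = ((4:ℝ):ℂ) by norm_num, h1,
      ← Complex.ofReal_cpow (by norm_num : (0:ℝ) ≤ 4), real4]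
  have h2 : (2:ℂ) ^ (-(j:ℂ)) = ((((2:ℝ)^j)⁻¹ : ℝ) : ℂ) := by
    rw [Complex.cpow_neg, Complex.cpow_natCast]; push_cast; ring
  have ha : (1/2 - -(j:ℂ)/2) = ((((j:ℝ)+1)/2 : ℝ) : ℂ) := by push_cast; ring
  have hb : (1 - -(j:ℂ)/2) = ((((j:ℝ)+2)/2 : ℝ) : ℂ) := by push_cast; ring
  rw [Zfun, zetaZ, ha, hb, h2, h4, Complex.Gamma_ofReal, Complex.Gamma_ofReal,
    ← Complex.ofReal_mul, ← Complex.ofReal_mul, ← Complex.ofReal_mul, ← Complex.ofReal_div,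
    ← Complex.ofReal_mul]
  congr 1
  have hΓb : Real.Gamma (((j:ℝ)+2)/2) ≠ 0 := (Real.Gamma_pos_of_pos (by positivity)).ne'
  have hs : Real.sqrt Real.pi ≠ 0 := by positivity
  have h2j : ((2:ℝ)^j) ≠ 0 := by positivity
  have hpi : Real.sqrt Real.pi * Real.sqrt Real.pi = Real.pi :=
    Real.mul_self_sqrt Real.pi_pos.le
  field_simp
  conv_lhs => rw [← hpi]
  ring

lemma prodreal (n : ℕ) :
    ∏ j ∈ Finset.range n,
      (Real.sqrt Real.pi * Real.Gamma (((j:ℝ)+1)/2) / Real.Gamma (((j:ℝ)+2)/2)) =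
    Real.sqrt Real.pi ^ (n+1) / Real.Gamma (((n:ℝ)+1)/2) := by
  induction n with
  | zero => norm_num [show ((2:ℝ))⁻¹ = 1/2 by norm_num, Real.Gamma_one_half_eq,
      div_self (by positivity : Real.sqrt Real.pi ≠ 0)]
  | succ n ih =>
    rw [Finset.prod_range_succ, ih]
    have hΓ1 : Real.Gamma (((n:ℝ)+1)/2) ≠ 0 := (Real.Gamma_pos_of_pos (by positivity)).ne'
    have hΓ2 : Real.Gamma (((n:ℝ)+2)/2) ≠ 0 := (Real.Gamma_pos_of_pos (by positivity)).ne'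
    have hc : (((n:ℕ)+1 : ℕ):ℝ) + 1 = (n:ℝ) + 2 := by push_cast; ring
    rw [hc]
    field_simp
    ring

theorem volume_sphere_eq_prod_Z (n : ℕ) (hn : 1 ≤ n) :
    (sphereVolume n : ℂ) = 2 * ∏ j ∈ Finset.range n, Zfun (-(j : ℂ)) := by
  have hprod : ∏ j ∈ Finset.range n, Zfun (-(j:ℂ)) =
      ((Real.sqrt Real.pi ^ (n+1) / Real.Gamma (((n:ℝ)+1)/2) : ℝ) : ℂ) := by
    rw [Finset.prod_congr rfl (fun j _ => ZA j), ← Complex.ofReal_prod, prodreal]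
  rw [hprod]
  have hpow : Real.pi ^ (((n:ℝ) + 1) / 2) = Real.sqrt Real.pi ^ (n+1) := by
    rw [Real.sqrt_eq_rpow, ← Real.rpow_natCast (Real.pi ^ ((1:ℝ)/2)) (n+1),
      ← Real.rpow_mul Real.pi_pos.le]
    push_cast
    ring_nf
  rw [sphereVolume, hpow]
  push_cast
  ring
end

section
/- For all complex s with s not a positive integer or positive half-integer, ζ_ℤ(s) = ∏_{k=1}^{∞} (k - s)^2/(k(k - 2s)), where the infinite product converges. -/
open Real Complex Filter

theorem zetaZ_prod_formula (s : ℂ)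
    (hs : ∀ n : ℕ, 1 ≤ n → s ≠ (n : ℂ) ∧ s ≠ (n : ℂ) - 1/2) :
    Tendsto (fun N : ℕ => ∏ k ∈ Finset.Icc 1 N,
        ((k : ℂ) - s) ^ 2 / ((k : ℂ) * ((k : ℂ) - 2 * s)))
      atTop (nhds (zetaZ s)) := by
  set a : ℂ := 1 - s with ha
  set b : ℂ := 1 - 2 * s with hb
  have hGa : Complex.Gamma a ≠ 0 := by
    apply Complex.Gamma_ne_zero
    intro m h
    refine (hs (m + 1) (by omega)).1 ?_
    push_cast
    linear_combination -h
  have hGhalf : Complex.Gamma (1/2 - s) ≠ 0 := by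
    apply Complex.Gamma_ne_zero
    intro m h
    refine (hs (m + 1) (by omega)).2 ?_
    push_cast
    linear_combination -h
  -- the limit of the Gamma sequences
  have key : Tendsto (fun n : ℕ => Complex.GammaSeq 1 n * Complex.GammaSeq b n /
      (Complex.GammaSeq a n) ^ 2) atTop
      (nhds (Complex.Gamma 1 * Complex.Gamma b / (Complex.Gamma a) ^ 2)) :=
    ((Complex.GammaSeq_tendsto_Gamma 1).mul (Complex.GammaSeq_tendsto_Gamma b)).div
      ((Complex.GammaSeq_tendsto_Gamma a).pow 2) (pow_ne_zero 2 hGa)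
  -- identify the limit with zetaZ s
  have hlim : Complex.Gamma 1 * Complex.Gamma b / (Complex.Gamma a) ^ 2 = zetaZ s := by
    have hdup := Complex.Gamma_mul_Gamma_add_half (1/2 - s)
    rw [show (1:ℂ)/2 - s + 1/2 = a by rw [ha]; ring,
        show 2 * ((1:ℂ)/2 - s) = b by rw [hb]; ring,
        show (1:ℂ) - b = 2 * s by rw [hb]; ring] at hdup
    have h4 : (4:ℂ) ^ s = 2 ^ (2 * s) := by
      rw [show (4:ℂ) = ((2:ℝ):ℂ) * ((2:ℝ):ℂ) by norm_num,
        Complex.mul_cpow_ofReal_nonneg (by norm_num) (by norm_num),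
        two_mul, Complex.cpow_add _ _ (by norm_num)]
      norm_num
    have h2 : (2:ℂ) ^ (2 * s) ≠ 0 := by
      intro h
      rcases Complex.cpow_eq_zero_iff _ _ |>.mp h with ⟨h2, -⟩
      norm_num at h2
    have hpi : ((Real.sqrt Real.pi : ℝ) : ℂ) ≠ 0 :=
      Complex.ofReal_ne_zero.mpr (Real.sqrt_ne_zero'.mpr Real.pi_pos)
    rw [Complex.Gamma_one, one_mul, zetaZ, ← ha, h4,
      div_eq_div_iff (pow_ne_zero 2 hGa) (mul_ne_zero (mul_ne_zero h2 hpi) hGa)]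
    linear_combination -Complex.Gamma a * hdup
  rw [← hlim]
  rw [show (fun N : ℕ => ∏ k ∈ Finset.Icc 1 N,
      ((k : ℂ) - s) ^ 2 / ((k : ℂ) * ((k : ℂ) - 2 * s))) =
      (fun N : ℕ => ∏ k ∈ Finset.Icc 1 N,
      ((k : ℂ) - s) ^ 2 / ((k : ℂ) * ((k : ℂ) - 2 * s))) from rfl]
  rw [← tendsto_add_atTop_iff_nat 1]
  apply key.congr'
  filter_upwards [eventually_ge_atTop 1] with n hn
  -- now prove GammaSeq identity
  have hn0 : (n : ℂ) ≠ 0 := Nat.cast_ne_zero.mpr (by omega)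
  have hfac : ((n.factorial : ℕ) : ℂ) ≠ 0 := Nat.cast_ne_zero.mpr n.factorial_ne_zero
  have hA : ∏ j ∈ Finset.range (n + 1), (a + (j:ℂ)) ≠ 0 := by
    rw [Finset.prod_ne_zero_iff]
    intro j _ h
    refine (hs (j + 1) (by omega)).1 ?_
    push_cast
    rw [ha] at h
    linear_combination -h
  have hB : ∏ j ∈ Finset.range (n + 1), (b + (j:ℂ)) ≠ 0 := by
    rw [Finset.prod_ne_zero_iff]
    intro j _ h
    rw [hb] at h
    rcases Nat.even_or_odd j with ⟨m, hm⟩ | ⟨m, hm⟩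
    · refine (hs (m + 1) (by omega)).2 ?_
      push_cast
      subst hm
      push_cast at h
      linear_combination -h/2
    · refine (hs (m + 1) (by omega)).1 ?_
      subst hm
      push_cast at h ⊢
      linear_combination -h/2
  have hC : ∏ j ∈ Finset.range (n + 1), ((1:ℂ) + (j:ℂ)) ≠ 0 := by
    rw [Finset.prod_ne_zero_iff]
    intro j _
    have h0 : ((1 + j : ℕ) : ℂ) ≠ 0 := Nat.cast_ne_zero.mpr (by omega)
    push_cast at h0
    exact h0
  have hpow : (n:ℂ) ^ (1:ℂ) * (n:ℂ) ^ b = ((n:ℂ) ^ a) ^ 2 := by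
    rw [sq, ← Complex.cpow_add _ _ hn0, ← Complex.cpow_add _ _ hn0]
    congr 1
    rw [ha, hb]; ring
  have hNa : (n:ℂ) ^ a ≠ 0 := by
    intro h
    exact hn0 (Complex.cpow_eq_zero_iff _ _ |>.mp h).1
  have hN1 : (n:ℂ) ^ (1:ℂ) ≠ 0 := by
    intro h
    exact hn0 (Complex.cpow_eq_zero_iff _ _ |>.mp h).1
  have hNb : (n:ℂ) ^ b ≠ 0 := by
    intro h
    exact hn0 (Complex.cpow_eq_zero_iff _ _ |>.mp h).1
  -- rewrite RHS product over Icc as range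
  rw [show Finset.Icc 1 (n + 1) = Finset.Ico 1 (n + 2) by rw [← Finset.Ico_add_one_right_eq_Icc]; rfl,
    Finset.prod_Ico_eq_prod_range]
  rw [show n + 2 - 1 = n + 1 from rfl]
  have hprod : ∏ j ∈ Finset.range (n + 1),
      (((1 + j : ℕ) : ℂ) - s) ^ 2 / (((1 + j : ℕ) : ℂ) * (((1 + j : ℕ) : ℂ) - 2 * s)) =
      (∏ j ∈ Finset.range (n + 1), (a + (j:ℂ))) ^ 2 /
      ((∏ j ∈ Finset.range (n + 1), ((1:ℂ) + (j:ℂ))) *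
       (∏ j ∈ Finset.range (n + 1), (b + (j:ℂ)))) := by
    rw [← Finset.prod_pow, ← Finset.prod_mul_distrib, ← Finset.prod_div_distrib]
    apply Finset.prod_congr rfl
    intro j _
    push_cast
    rw [ha, hb]
    ring_nf
  rw [hprod, Complex.GammaSeq, Complex.GammaSeq, Complex.GammaSeq]
  set A := ∏ j ∈ Finset.range (n + 1), (a + (j:ℂ)) with hA'
  set B := ∏ j ∈ Finset.range (n + 1), (b + (j:ℂ)) with hB'
  set C := ∏ j ∈ Finset.range (n + 1), ((1:ℂ) + (j:ℂ)) with hC'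
  set Na := (n:ℂ) ^ a with hNa'
  set Nb := (n:ℂ) ^ b with hNb'
  set N1 := (n:ℂ) ^ (1:ℂ) with hN1'
  clear_value A B C Na Nb N1
  field_simp
  linear_combination hpow
end

section
/- For x, y complex numbers that are not nonpositive integers with x + y not a nonpositive integer, the Beta function satisfies B(x,y) = Γ(x)Γ(y)/Γ(x+y) = ((x+y)/(xy)) · ∏_{k=1}^{∞} (1 + (x+y)/k)/((1 + x/k)(1 + y/k)). -/
open Complex Filter

private lemma prod_Icc_one_eq_range (f : ℕ → ℂ) (n : ℕ) :
    ∏ k ∈ Finset.Icc 1 n, f k = ∏ i ∈ Finset.range n, f (i + 1) := by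
  rw [← Finset.Ico_add_one_right_eq_Icc, Finset.prod_Ico_eq_prod_range]
  simp [add_comm]

private lemma range_prod_eq (s : ℂ) (n : ℕ) :
    ∏ j ∈ Finset.range (n + 1), (s + j) = s * ∏ k ∈ Finset.Icc 1 n, (s + k) := by
  rw [Finset.prod_range_succ', prod_Icc_one_eq_range (fun k => s + k) n]
  push_cast
  ring

theorem beta_product_formula (x y : ℂ)
    (hx : ∀ n : ℕ, x ≠ -(n : ℂ)) (hy : ∀ n : ℕ, y ≠ -(n : ℂ))
    (hxy : ∀ n : ℕ, x + y ≠ -(n : ℂ)) :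
    Tendsto (fun N : ℕ => ((x + y) / (x * y)) * ∏ k ∈ Finset.Icc 1 N,
        (1 + (x + y) / (k : ℂ)) / ((1 + x / (k : ℂ)) * (1 + y / (k : ℂ))))
      atTop (nhds (Complex.Gamma x * Complex.Gamma y / Complex.Gamma (x + y))) := by
  have hGne : Complex.Gamma (x + y) ≠ 0 := Complex.Gamma_ne_zero hxy
  have H := ((Complex.GammaSeq_tendsto_Gamma x).mul
    (Complex.GammaSeq_tendsto_Gamma y)).div (Complex.GammaSeq_tendsto_Gamma (x + y)) hGne
  refine H.congr' ?_
  filter_upwards [eventually_ge_atTop 1] with n hn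
  have hn0 : (n : ℂ) ≠ 0 := Nat.cast_ne_zero.mpr (by omega)
  -- nonvanishing facts
  have hx0 : x ≠ 0 := by simpa using hx 0
  have hy0 : y ≠ 0 := by simpa using hy 0
  have hxy0 : x + y ≠ 0 := by simpa using hxy 0
  have hxk : ∀ k ∈ Finset.Icc 1 n, x + (k : ℂ) ≠ 0 := by
    intro k _; intro h; exact hx k (by linear_combination h)
  have hyk : ∀ k ∈ Finset.Icc 1 n, y + (k : ℂ) ≠ 0 := by
    intro k _; intro h; exact hy k (by linear_combination h)
  have hxyk : ∀ k ∈ Finset.Icc 1 n, x + y + (k : ℂ) ≠ 0 := by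
    intro k _; intro h; exact hxy k (by linear_combination h)
  have hk0 : ∀ k ∈ Finset.Icc 1 n, (k : ℂ) ≠ 0 := by
    intro k hk
    exact Nat.cast_ne_zero.mpr (by simp at hk; omega)
  -- rewrite the product factors
  have hprod : ∏ k ∈ Finset.Icc 1 n,
      (1 + (x + y) / (k : ℂ)) / ((1 + x / (k : ℂ)) * (1 + y / (k : ℂ)))
      = (∏ k ∈ Finset.Icc 1 n, (k : ℂ) * (x + y + k)) /
        ∏ k ∈ Finset.Icc 1 n, ((x + k) * (y + k)) := by
    rw [← Finset.prod_div_distrib]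
    refine Finset.prod_congr rfl fun k hk => ?_
    have h1 := hk0 k hk
    have h2 := hxk k hk
    have h3 := hyk k hk
    have e1 : 1 + (x + y) / (k:ℂ) = (x + y + k) / k := by field_simp; ring
    have e2 : 1 + x / (k:ℂ) = (x + k) / k := by field_simp; ring
    have e3 : 1 + y / (k:ℂ) = (y + k) / k := by field_simp; ring
    rw [e1, e2, e3, div_mul_div_comm]
    rw [div_div_div_eq]
    rw [mul_comm ((x:ℂ)+k) (y+k)]
    field_simp
  rw [hprod]
  simp only [Pi.div_apply, Complex.GammaSeq, range_prod_eq]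
  have hPx : ∏ k ∈ Finset.Icc 1 n, (x + (k : ℂ)) ≠ 0 := Finset.prod_ne_zero_iff.mpr hxk
  have hPy : ∏ k ∈ Finset.Icc 1 n, (y + (k : ℂ)) ≠ 0 := Finset.prod_ne_zero_iff.mpr hyk
  have hPxy : ∏ k ∈ Finset.Icc 1 n, (x + y + (k : ℂ)) ≠ 0 := Finset.prod_ne_zero_iff.mpr hxyk
  have hfac : ((n.factorial : ℕ) : ℂ) ≠ 0 := Nat.cast_ne_zero.mpr n.factorial_ne_zero
  have hnx : (n : ℂ) ^ x ≠ 0 := by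
    simp [Complex.cpow_def, hn0, Complex.exp_ne_zero]
  have hny : (n : ℂ) ^ y ≠ 0 := by
    simp [Complex.cpow_def, hn0, Complex.exp_ne_zero]
  have hcpow : (n : ℂ) ^ (x + y) = (n : ℂ) ^ x * (n : ℂ) ^ y :=
    Complex.cpow_add _ _ hn0
  have hfacprod : ∏ k ∈ Finset.Icc 1 n, ((k : ℕ) : ℂ) = ((n.factorial : ℕ) : ℂ) := by
    rw [prod_Icc_one_eq_range (fun k => ((k : ℕ) : ℂ)) n]
    push_cast
    exact_mod_cast congrArg (Nat.cast : ℕ → ℂ) (Finset.prod_range_add_one_eq_factorial n)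
  rw [Finset.prod_mul_distrib, Finset.prod_mul_distrib, hfacprod, hcpow]
  field_simp
end

section
/- For every natural number n ≥ 1, ζ_ℤ(-n) = 4^n π^{-1/2} Γ(1/2 + n)/Γ(1 + n) = binom(2n, n). -/
lemma sqrtpi_eq : (Real.sqrt Real.pi : ℂ) = (Real.pi : ℂ) ^ (1/2 : ℂ) := by
  rw [show (Real.sqrt Real.pi) = Real.pi ^ (1/2 : ℝ) from Real.sqrt_eq_rpow _,
    Complex.ofReal_cpow Real.pi_pos.le]
  norm_num

lemma gamma_half_add (n : ℕ) :
    Complex.Gamma (1/2 + n) = ((2*n).factorial : ℂ) / ((4:ℂ)^n * (n.factorial : ℂ))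
      * (Real.sqrt Real.pi : ℂ) := by
  induction n with
  | zero => simpa [sqrtpi_eq] using Complex.Gamma_one_half_eq
  | succ n ih =>
    have h1 : (1/2 : ℂ) + (n+1 : ℕ) = (1/2 + n) + 1 := by push_cast; ring
    have hne : (1/2 : ℂ) + n ≠ 0 := by
      intro h
      have h' : (1/2 : ℝ) + n = 0 := by simpa using congrArg Complex.re h
      nlinarith [(Nat.cast_nonneg n : (0:ℝ) ≤ n)]
    rw [h1, Complex.Gamma_add_one _ hne, ih]
    have e1 : (((2*(n+1)).factorial : ℕ) : ℂ)
        = (2*(n:ℂ)+2) * (2*n+1) * (((2*n).factorial : ℕ) : ℂ) := by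
      rw [show 2*(n+1) = ((2*n+1)+1) by ring, Nat.factorial_succ, Nat.factorial_succ]
      push_cast; ring
    have e2 : ((((n+1)).factorial : ℕ) : ℂ) = ((n:ℂ)+1) * ((n.factorial : ℕ) : ℂ) := by
      rw [Nat.factorial_succ]; push_cast; ring
    rw [e1, e2]
    have hf : ((n.factorial : ℕ) : ℂ) ≠ 0 := by exact_mod_cast Nat.factorial_ne_zero n
    have h4n : ((4:ℂ)^n) ≠ 0 := pow_ne_zero _ (by norm_num)
    have hn1 : ((n:ℂ)+1) ≠ 0 := by
      intro h
      have h' : (n:ℝ) + 1 = 0 := by simpa using congrArg Complex.re h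
      nlinarith [(Nat.cast_nonneg n : (0:ℝ) ≤ n)]
    push_cast
    field_simp
    ring

theorem zetaZ_neg_nat (n : ℕ) (hn : 1 ≤ n) :
    zetaZ (-(n : ℂ))
      = (4:ℂ) ^ (n : ℕ) * ((Real.pi : ℂ)) ^ (-(1/2) : ℂ)
          * Complex.Gamma (1/2 + n) / Complex.Gamma (1 + n) ∧
    zetaZ (-(n : ℂ)) = (Nat.choose (2 * n) n : ℂ) := by
  have h4 : (4:ℂ) ^ (-(n:ℂ)) = ((4:ℂ)^(n:ℕ))⁻¹ := by
    rw [Complex.cpow_neg, Complex.cpow_natCast]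
  have h4n : ((4:ℂ)^(n:ℕ)) ≠ 0 := pow_ne_zero _ (by norm_num)
  have hsp : (Real.sqrt Real.pi : ℂ) ≠ 0 :=
    Complex.ofReal_ne_zero.mpr (by positivity)
  have hpi : ((Real.pi : ℂ)) ^ (-(1/2) : ℂ) = ((Real.sqrt Real.pi : ℂ))⁻¹ := by
    rw [Complex.cpow_neg, sqrtpi_eq]
  have hG1 : Complex.Gamma (1 - -(n:ℂ)) = (n.factorial : ℂ) := by
    rw [show (1 : ℂ) - -(n:ℂ) = (n:ℂ) + 1 by ring, Complex.Gamma_nat_eq_factorial]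
  have hGne : Complex.Gamma (1 + (n:ℂ)) = (n.factorial : ℂ) := by
    rw [show (1 : ℂ) + (n:ℂ) = (n:ℂ) + 1 by ring, Complex.Gamma_nat_eq_factorial]
  have hfne : ((n.factorial : ℕ) : ℂ) ≠ 0 := by exact_mod_cast Nat.factorial_ne_zero n
  have key : zetaZ (-(n:ℂ)) = (4:ℂ)^(n:ℕ) * Complex.Gamma (1/2 + n)
      / ((Real.sqrt Real.pi : ℂ) * (n.factorial : ℂ)) := by
    rw [zetaZ, show (1:ℂ)/2 - -(n:ℂ) = 1/2 + n by ring, hG1, h4]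
    field_simp
  constructor
  · rw [key, hpi, hGne]
    field_simp
  · have hc : (((2*n).factorial : ℕ) : ℂ)
        = (Nat.choose (2*n) n : ℂ) * (n.factorial : ℂ) * (n.factorial : ℂ) := by
      have h := Nat.choose_mul_factorial_mul_factorial (show n ≤ 2*n by omega)
      rw [show 2*n - n = n by omega] at h
      exact_mod_cast h.symm
    rw [key, gamma_half_add, hc]
    field_simp
end

section
/- ζ_ℤ'(0) = 0 and ζ_ℤ'(−1/2) = (8/π)(1 − 2 log 2), where ζ_ℤ(s) = Γ(1/2 − s)/(4^s √π Γ(1 − s)). -/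
open Complex

private lemma zetaZ_ne_neg_nat {z : ℂ} (hz : 0 < z.re) : ∀ m : ℕ, z ≠ -m := by
  intro m h
  rw [h] at hz
  simp only [neg_re, natCast_re] at hz
  have : (0:ℝ) ≤ (m:ℝ) := Nat.cast_nonneg m
  linarith

theorem deriv_zetaZ_special :
    deriv zetaZ 0 = 0 ∧
    deriv zetaZ (-(1/2)) = (8 / (Real.pi : ℂ)) * (1 - 2 * (Real.log 2 : ℂ)) := by
  have hπ : (0:ℝ) < Real.pi := Real.pi_pos
  set sπ : ℂ := ((Real.sqrt Real.pi : ℝ) : ℂ) with hsπdef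
  have hsπ0 : sπ ≠ 0 := by
    simp only [hsπdef, ne_eq, ofReal_eq_zero]
    exact Real.sqrt_ne_zero'.mpr hπ
  have hsq : sπ * sπ = (Real.pi : ℂ) := by
    rw [hsπdef]; norm_cast; exact Real.mul_self_sqrt hπ.le
  have hπ0 : ((Real.pi : ℝ) : ℂ) ≠ 0 := by
    rw [← hsq]; exact mul_ne_zero hsπ0 hsπ0
  have hG1 : Complex.Gamma 1 = 1 := Complex.Gamma_one
  have hGh : Complex.Gamma (1/2) = sπ := by
    rw [show ((1:ℂ)/2) = ((1/2:ℝ):ℂ) by push_cast; ring, Complex.Gamma_ofReal,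
      Real.Gamma_one_half_eq]
  have hlog2 : Complex.log 2 = ((Real.log 2 : ℝ) : ℂ) := by
    rw [show (2:ℂ) = ((2:ℝ):ℂ) by norm_num, ← Complex.ofReal_log (by norm_num : (0:ℝ) ≤ 2)]
  have hlog4 : Complex.log 4 = 2 * ((Real.log 2 : ℝ) : ℂ) := by
    rw [show (4:ℂ) = ((4:ℝ):ℂ) by norm_num, ← Complex.ofReal_log (by norm_num : (0:ℝ) ≤ 4),
      show (4:ℝ) = 2^(2:ℕ) by norm_num, Real.log_pow]
    push_cast; ring
  set L : ℂ := ((Real.log 2 : ℝ) : ℂ) with hLdef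
  -- basic HasDerivAt facts for Gamma
  set a : ℂ := deriv Complex.Gamma 1 with hadef
  set d : ℂ := deriv Complex.Gamma (1/2) with hddef
  set b : ℂ := deriv Complex.Gamma (3/2) with hbdef
  have ha : HasDerivAt Complex.Gamma a 1 :=
    (Complex.differentiableAt_Gamma 1 (zetaZ_ne_neg_nat (by norm_num))).hasDerivAt
  have hd : HasDerivAt Complex.Gamma d (1/2) :=
    (Complex.differentiableAt_Gamma (1/2) (zetaZ_ne_neg_nat (by norm_num))).hasDerivAt
  have hb : HasDerivAt Complex.Gamma b (3/2) :=
    (Complex.differentiableAt_Gamma (3/2) (zetaZ_ne_neg_nat (by norm_num))).hasDerivAt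
  -- relation from Gamma (z+1) = z * Gamma z at z = 1/2 : b = Gamma(1/2) + (1/2) * d
  have hrel1 : Complex.Gamma (1/2) + (1/2) * d = b := by
    have hb' : HasDerivAt Complex.Gamma b (1/2 + 1) := by
      rwa [show (1/2 + 1 : ℂ) = 3/2 by norm_num]
    have hL : HasDerivAt (fun z : ℂ => Complex.Gamma (z + 1)) b (1/2) :=
      HasDerivAt.comp_add_const _ _ hb'
    have hR : HasDerivAt (fun z : ℂ => z * Complex.Gamma z)
        (1 * Complex.Gamma (1/2) + (1/2) * d) (1/2) := (hasDerivAt_id _).mul hd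
    have hev : (fun z : ℂ => z * Complex.Gamma z) =ᶠ[nhds (1/2:ℂ)]
        (fun z : ℂ => Complex.Gamma (z + 1)) := by
      filter_upwards [isOpen_ne.mem_nhds (show (1/2:ℂ) ≠ 0 by norm_num)] with z hz
      exact (Complex.Gamma_add_one z hz).symm
    have hL2 : HasDerivAt (fun z : ℂ => z * Complex.Gamma z) b (1/2) :=
      hL.congr_of_eventuallyEq hev
    have := hR.unique hL2
    linear_combination this
  -- relation from duplication formula at z = 1/2 : d + sπ * a = (2*a - 2*L) * sπ
  have hrel2 : d = sπ * a - 2 * sπ * L := by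
    have ha1 : HasDerivAt Complex.Gamma a (1/2 + 1/2) := by
      rwa [show (1/2 + 1/2 : ℂ) = 1 by norm_num]
    have ha2 : HasDerivAt Complex.Gamma a (2 * (1/2)) := by
      rwa [show (2 * (1/2) : ℂ) = 1 by norm_num]
    have hshift : HasDerivAt (fun z : ℂ => Complex.Gamma (z + 1/2)) a (1/2) :=
      HasDerivAt.comp_add_const _ _ ha1
    have hL : HasDerivAt (fun z : ℂ => Complex.Gamma z * Complex.Gamma (z + 1/2))
        (d * Complex.Gamma (1/2 + 1/2) + Complex.Gamma (1/2) * a) (1/2) := hd.mul hshift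
    have h2z : HasDerivAt (fun z : ℂ => Complex.Gamma (2 * z)) ((2:ℂ) • a) (1/2) := by
      have hin : HasDerivAt (fun z : ℂ => 2 * z) ((2:ℂ) * 1) (1/2) :=
        (hasDerivAt_id (1/2:ℂ)).const_mul 2
      simpa [Function.comp_def] using HasDerivAt.scomp (1/2:ℂ) ha2 hin
    have hpow : HasDerivAt (fun z : ℂ => (2:ℂ) ^ (1 - 2*z))
        ((2:ℂ) ^ (1 - 2*(1/2:ℂ)) * Complex.log 2 * -(2 * 1)) (1/2) := by
      exact HasDerivAt.const_cpow (((hasDerivAt_id (1/2:ℂ)).const_mul 2).const_sub 1)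
        (Or.inl two_ne_zero)
    have hR : HasDerivAt (fun z : ℂ => Complex.Gamma (2*z) * (2:ℂ) ^ (1 - 2*z) * sπ)
        (((2:ℂ) • a * (2:ℂ) ^ (1 - 2*(1/2:ℂ)) +
          Complex.Gamma (2 * (1/2)) * ((2:ℂ) ^ (1 - 2*(1/2:ℂ)) * Complex.log 2 * -(2 * 1))) * sπ)
        (1/2) := (h2z.mul hpow).mul_const sπ
    have hfun : (fun z : ℂ => Complex.Gamma z * Complex.Gamma (z + 1/2)) =
        (fun z : ℂ => Complex.Gamma (2*z) * (2:ℂ) ^ (1 - 2*z) * sπ) :=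
      funext fun z => Complex.Gamma_mul_Gamma_add_half z
    rw [hfun] at hL
    have heq := hL.unique hR
    rw [show (1 - 2*(1/2:ℂ)) = 0 by norm_num, show ((1:ℂ)/2 + 1/2) = 1 by norm_num,
      show (2 * (1/2:ℂ)) = 1 by norm_num, hG1, cpow_zero, hGh, hlog2, smul_eq_mul] at heq
    linear_combination heq
  -- first derivative
  constructor
  · have hd' : HasDerivAt Complex.Gamma d (1/2 - 0) := by rwa [sub_zero]
    have ha' : HasDerivAt Complex.Gamma a (1 - 0) := by rwa [sub_zero]
    have hnum : HasDerivAt (fun s : ℂ => Complex.Gamma (1/2 - s)) (-d) 0 :=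
      HasDerivAt.comp_const_sub _ _ hd'
    have hGden : HasDerivAt (fun s : ℂ => Complex.Gamma (1 - s)) (-a) 0 :=
      HasDerivAt.comp_const_sub _ _ ha'
    have h4 : HasDerivAt (fun s : ℂ => (4:ℂ) ^ s) ((4:ℂ) ^ (0:ℂ) * Complex.log 4 * 1) 0 :=
      HasDerivAt.const_cpow (hasDerivAt_id (0:ℂ)) (Or.inl (by norm_num))
    have hden : HasDerivAt (fun s : ℂ => (4:ℂ) ^ s * sπ * Complex.Gamma (1 - s))
        (((4:ℂ) ^ (0:ℂ) * Complex.log 4 * 1 * sπ) * Complex.Gamma (1 - 0) +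
          ((4:ℂ) ^ (0:ℂ) * sπ) * (-a)) 0 := (h4.mul_const sπ).mul hGden
    have hden0 : (4:ℂ) ^ (0:ℂ) * sπ * Complex.Gamma (1 - 0) ≠ 0 := by
      rw [sub_zero, hG1, cpow_zero]; simpa using hsπ0
    have hZ' : HasDerivAt zetaZ _ 0 := hnum.div hden hden0
    rw [hZ'.deriv]
    rw [sub_zero, sub_zero, cpow_zero, hG1, hGh, hlog4, hrel2]
    field_simp
    ring
  · have ha' : HasDerivAt Complex.Gamma a (1/2 - -(1/2)) := by
      rwa [show (1/2 - -(1/2) : ℂ) = 1 by norm_num]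
    have hb' : HasDerivAt Complex.Gamma b (1 - -(1/2)) := by
      rwa [show (1 - -(1/2) : ℂ) = 3/2 by norm_num]
    have hnum : HasDerivAt (fun s : ℂ => Complex.Gamma (1/2 - s)) (-a) (-(1/2)) :=
      HasDerivAt.comp_const_sub _ _ ha'
    have hGden : HasDerivAt (fun s : ℂ => Complex.Gamma (1 - s)) (-b) (-(1/2)) :=
      HasDerivAt.comp_const_sub _ _ hb'
    have h4 : HasDerivAt (fun s : ℂ => (4:ℂ) ^ s)
        ((4:ℂ) ^ (-(1/2):ℂ) * Complex.log 4 * 1) (-(1/2)) :=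
      HasDerivAt.const_cpow (hasDerivAt_id (-(1/2):ℂ)) (Or.inl (by norm_num))
    have hden : HasDerivAt (fun s : ℂ => (4:ℂ) ^ s * sπ * Complex.Gamma (1 - s))
        (((4:ℂ) ^ (-(1/2):ℂ) * Complex.log 4 * 1 * sπ) * Complex.Gamma (1 - -(1/2)) +
          ((4:ℂ) ^ (-(1/2):ℂ) * sπ) * (-b)) (-(1/2)) := (h4.mul_const sπ).mul hGden
    have h4half : (4:ℂ) ^ (-(1/2) : ℂ) = 1/2 := by
      rw [show (-(1/2):ℂ) = ((-(1/2):ℝ):ℂ) by push_cast; ring,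
        show (4:ℂ) = ((4:ℝ):ℂ) by norm_num,
        ← Complex.ofReal_cpow (by norm_num : (0:ℝ) ≤ 4)]
      rw [show (4:ℝ) = 2^(2:ℕ) by norm_num, ← Real.rpow_natCast, ← Real.rpow_mul (by norm_num)]
      rw [show ((2:ℕ):ℝ) * (-(1/2)) = (-1 : ℝ) by push_cast; ring, Real.rpow_neg_one]
      norm_num
    have hG32 : Complex.Gamma (3/2 : ℂ) = sπ / 2 := by
      rw [show (3/2 : ℂ) = 1/2 + 1 by norm_num,
        Complex.Gamma_add_one _ (by norm_num : (1/2:ℂ) ≠ 0), hGh]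
      ring
    have hden0 : (4:ℂ) ^ (-(1/2):ℂ) * sπ * Complex.Gamma (1 - -(1/2)) ≠ 0 := by
      rw [show (1 - -(1/2) : ℂ) = 3/2 by norm_num, hG32, h4half]
      field_simp
      exact div_ne_zero (pow_ne_zero _ hsπ0) (by norm_num)
    have hZ' : HasDerivAt zetaZ _ (-(1/2)) := hnum.div hden hden0
    rw [hZ'.deriv]
    rw [show (1/2 - -(1/2) : ℂ) = 1 by norm_num, show (1 - -(1/2) : ℂ) = 3/2 by norm_num,
      h4half, hG1, hG32, hlog4, ← hrel1, hGh, hrel2, ← hsq]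
    field_simp
    ring
end

section
/- For every integer n ≥ 1, ζ_ℤ'(−n) = binom(2n,n) · ∑_{k=1}^{n} (1/k − 2/(2k−1)). -/
lemma pos_nat_ne_neg (n : ℕ) : ∀ m : ℕ, (n:ℂ) + 1 ≠ -(m:ℂ) := by
  intro m h
  have := congrArg Complex.re h
  simp at this
  have h1 : (0:ℝ) ≤ (n:ℝ) := Nat.cast_nonneg n
  have h2 : (0:ℝ) ≤ (m:ℝ) := Nat.cast_nonneg m
  linarith

lemma derivGamma_succ (z : ℂ) (hz : ∀ m : ℕ, z ≠ -(m:ℂ)) :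
    deriv Complex.Gamma (z + 1) = Complex.Gamma z + z * deriv Complex.Gamma z := by
  have hz1 : ∀ m : ℕ, z + 1 ≠ -(m:ℂ) := by
    intro m h
    apply hz (m + 1)
    push_cast
    linear_combination h
  have hG : HasDerivAt Complex.Gamma (deriv Complex.Gamma z) z :=
    (Complex.differentiableAt_Gamma z hz).hasDerivAt
  have hG1 : HasDerivAt Complex.Gamma (deriv Complex.Gamma (z + 1)) (z + 1) :=
    (Complex.differentiableAt_Gamma _ hz1).hasDerivAt
  have hf : HasDerivAt (fun s => Complex.Gamma (s + 1)) (deriv Complex.Gamma (z + 1)) z := by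
    have := hG1.comp z ((hasDerivAt_id z).add_const 1)
    simp only [mul_one] at this
    exact this
  have hg : HasDerivAt (fun s => s * Complex.Gamma s)
      (Complex.Gamma z + z * deriv Complex.Gamma z) z := by
    have := (hasDerivAt_id z).mul hG
    simp only [id_eq, one_mul] at this
    exact this
  have hz0 : z ≠ 0 := by simpa using hz 0
  have heq : (fun s => Complex.Gamma (s + 1)) =ᶠ[nhds z] fun s => s * Complex.Gamma s := by
    filter_upwards [isOpen_ne.mem_nhds hz0] with s hs using Complex.Gamma_add_one s hs
  exact (hf.congr_of_eventuallyEq heq.symm).unique hg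

lemma derivGamma_nat (n : ℕ) :
    deriv Complex.Gamma ((n:ℂ) + 1)
      = (n.factorial : ℂ) * (deriv Complex.Gamma 1 + ∑ k ∈ Finset.Icc 1 n, 1/(k:ℂ)) := by
  induction n with
  | zero => simp
  | succ n ih =>
    have h1 : deriv Complex.Gamma (((n:ℂ) + 1) + 1)
        = Complex.Gamma ((n:ℂ) + 1) + ((n:ℂ) + 1) * deriv Complex.Gamma ((n:ℂ) + 1) :=
      derivGamma_succ _ (pos_nat_ne_neg n)
    have h2 : Complex.Gamma ((n:ℂ) + 1) = (n.factorial : ℂ) := Complex.Gamma_nat_eq_factorial n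
    have h3 : ∑ k ∈ Finset.Icc 1 (n+1), 1/(k:ℂ)
        = (∑ k ∈ Finset.Icc 1 n, 1/(k:ℂ)) + 1/((n:ℂ)+1) := by
      rw [Finset.sum_Icc_succ_top (by omega)]
      push_cast; ring
    have hne : ((n:ℂ) + 1) ≠ 0 := by
      intro h; simpa using pos_nat_ne_neg n 0 (by simpa using h)
    push_cast [Nat.factorial_succ]
    rw [h1, ih, h2, h3]
    field_simp
    ring

lemma sum_identity (n : ℕ) :
    ∑ k ∈ Finset.Icc 1 n, (1 / (k : ℂ) - 2 / (2 * (k : ℂ) - 1))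
      = 2 * (∑ k ∈ Finset.Icc 1 n, 1/(k:ℂ)) - 2 * (∑ k ∈ Finset.Icc 1 (2*n), 1/(k:ℂ)) := by
  induction n with
  | zero => simp
  | succ n ih =>
    have hn1 : ((n:ℂ) + 1) ≠ 0 := by
      intro h; simpa using pos_nat_ne_neg n 0 (by simpa using h)
    have h21 : (2*(n:ℂ) + 1) ≠ 0 := by
      intro h
      have : ((2*n+1 : ℕ) : ℂ) = 0 := by push_cast; linear_combination h
      exact absurd (Nat.cast_eq_zero.mp this) (by omega)
    have hsplit : ∑ k ∈ Finset.Icc 1 (2*(n+1)), 1/(k:ℂ)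
        = (∑ k ∈ Finset.Icc 1 (2*n), 1/(k:ℂ)) + 1/(2*(n:ℂ)+1) + 1/(2*(n:ℂ)+2) := by
      have e1 : 2*(n+1) = (2*n+1) + 1 := by ring
      rw [e1, Finset.sum_Icc_succ_top (by omega), Finset.sum_Icc_succ_top (by omega)]
      push_cast; ring
    rw [Finset.sum_Icc_succ_top (by omega : 1 ≤ n + 1), ih,
      Finset.sum_Icc_succ_top (by omega : 1 ≤ n + 1), hsplit]
    have h22 : (2*(n:ℂ) + 2) ≠ 0 := by
      intro h
      have : ((2*n+2 : ℕ) : ℂ) = 0 := by push_cast; linear_combination h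
      exact absurd (Nat.cast_eq_zero.mp this) (by omega)
    push_cast
    have he : 2 * ((n:ℂ)+1) - 1 = 2*(n:ℂ)+1 := by ring
    rw [he]
    field_simp
    ring

lemma zetaZ_eq_aux (s : ℂ) (h : Complex.Gamma (1 - s) ≠ 0) :
    zetaZ s = Complex.Gamma (1 - 2*s) / (Complex.Gamma (1 - s))^2 := by
  have hd := Complex.Gamma_mul_Gamma_add_half (1/2 - s)
  have e1 : (1/2 : ℂ) - s + 1/2 = 1 - s := by ring
  have e2 : (1 : ℂ) - 2*((1/2:ℂ) - s) = 2*s := by ring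
  have e3 : 2*((1/2:ℂ) - s) = 1 - 2*s := by ring
  rw [e1, e2, e3] at hd
  have h2s : (2:ℂ)^s ≠ 0 := by
    rw [Complex.cpow_def_of_ne_zero two_ne_zero]
    exact Complex.exp_ne_zero _
  have h4 : (4:ℂ)^s = (2:ℂ)^s * (2:ℂ)^s := by
    have := Complex.mul_cpow_ofReal_nonneg (by norm_num : (0:ℝ) ≤ 2) (by norm_num : (0:ℝ) ≤ 2) s
    norm_num at this
    exact this
  have h22 : (2:ℂ)^(2*s) = (2:ℂ)^s * (2:ℂ)^s := by
    rw [two_mul, Complex.cpow_add _ _ two_ne_zero]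
  have hpi : ((Real.sqrt Real.pi : ℝ) : ℂ) ≠ 0 :=
    Complex.ofReal_ne_zero.mpr (by positivity)
  rw [h22] at hd
  unfold zetaZ
  rw [h4]
  set Gh := Complex.Gamma (1/2 - s) with hGh
  set Gv := Complex.Gamma (1 - s) with hGv
  set Gu := Complex.Gamma (1 - 2*s) with hGu
  set t := (2:ℂ)^s with ht
  set p := ((Real.sqrt Real.pi : ℝ) : ℂ) with hp
  rw [div_eq_div_iff (by exact mul_ne_zero (mul_ne_zero (mul_ne_zero h2s h2s) hpi) h)
    (pow_ne_zero 2 h)]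
  linear_combination Gv * hd

theorem deriv_zetaZ_neg_nat (n : ℕ) (hn : 1 ≤ n) :
    deriv zetaZ (-(n : ℂ))
      = (Nat.choose (2 * n) n : ℂ)
          * ∑ k ∈ Finset.Icc 1 n, (1 / (k : ℂ) - 2 / (2 * (k : ℂ) - 1)) := by
  set N : ℂ := -(n : ℂ) with hN
  have e1 : 1 - N = (n:ℂ) + 1 := by rw [hN]; ring
  have e2 : 1 - 2*N = ((2*n : ℕ):ℂ) + 1 := by rw [hN]; push_cast; ring
  have hp1 : ∀ m : ℕ, 1 - N ≠ -(m:ℂ) := by rw [e1]; exact pos_nat_ne_neg n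
  have hp2 : ∀ m : ℕ, 1 - 2*N ≠ -(m:ℂ) := by rw [e2]; exact pos_nat_ne_neg (2*n)
  have hvN : Complex.Gamma (1 - N) = (n.factorial : ℂ) := by
    rw [e1]; exact Complex.Gamma_nat_eq_factorial n
  have huN : Complex.Gamma (1 - 2*N) = ((2*n).factorial : ℂ) := by
    rw [e2]; exact Complex.Gamma_nat_eq_factorial (2*n)
  have hFne : (n.factorial : ℂ) ≠ 0 := Nat.cast_ne_zero.mpr n.factorial_ne_zero
  have hvne : Complex.Gamma (1 - N) ≠ 0 := by rw [hvN]; exact hFne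
  -- eventual equality
  have hcont : ContinuousAt (fun s => Complex.Gamma (1 - s)) N :=
    (Complex.differentiableAt_Gamma _ hp1).continuousAt.comp
      ((continuous_const.sub continuous_id).continuousAt)
  have hev : ∀ᶠ s in nhds N, Complex.Gamma (1 - s) ≠ 0 := hcont.eventually_ne hvne
  have heq : zetaZ =ᶠ[nhds N] fun s => Complex.Gamma (1 - 2*s) / (Complex.Gamma (1 - s))^2 :=
    hev.mono fun s hs => zetaZ_eq_aux s hs
  rw [heq.deriv_eq]
  -- compute the derivative
  set a := deriv Complex.Gamma (1 - 2*N) with ha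
  set b := deriv Complex.Gamma (1 - N) with hb
  have hGa : HasDerivAt Complex.Gamma a (1 - 2*N) :=
    (Complex.differentiableAt_Gamma _ hp2).hasDerivAt
  have hGb : HasDerivAt Complex.Gamma b (1 - N) :=
    (Complex.differentiableAt_Gamma _ hp1).hasDerivAt
  have hin2 : HasDerivAt (fun s : ℂ => 1 - 2*s) (-2) N := by
    simpa using ((hasDerivAt_id N).const_mul (2:ℂ)).const_sub 1
  have hin1 : HasDerivAt (fun s : ℂ => 1 - s) (-1) N := by
    simpa using (hasDerivAt_id N).const_sub 1
  have hu : HasDerivAt (fun s => Complex.Gamma (1 - 2*s)) (a * (-2)) N := hGa.comp N hin2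
  have hv : HasDerivAt (fun s => Complex.Gamma (1 - s)) (b * (-1)) N := hGb.comp N hin1
  have hv2 : HasDerivAt (fun s => (Complex.Gamma (1 - s))^2)
      ((2:ℕ) * (Complex.Gamma (1 - N))^1 * (b * (-1))) N := hv.pow 2
  have hdiv := hu.div hv2 (pow_ne_zero 2 hvne)
  rw [show deriv (fun s => Complex.Gamma (1 - 2*s) / Complex.Gamma (1 - s)^2) N = _ from hdiv.deriv]
  -- substitute values
  have hA : a = ((2*n).factorial : ℂ)
      * (deriv Complex.Gamma 1 + ∑ k ∈ Finset.Icc 1 (2*n), 1/(k:ℂ)) := by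
    rw [ha, e2]; exact derivGamma_nat (2*n)
  have hB : b = (n.factorial : ℂ)
      * (deriv Complex.Gamma 1 + ∑ k ∈ Finset.Icc 1 n, 1/(k:ℂ)) := by
    rw [hb, e1]; exact derivGamma_nat n
  have hC : (((2*n).choose n : ℕ) : ℂ) * (n.factorial : ℂ) * (n.factorial : ℂ)
      = ((2*n).factorial : ℂ) := by
    have := Nat.choose_mul_factorial_mul_factorial (by omega : n ≤ 2*n)
    have h2 : 2*n - n = n := by omega
    rw [h2] at this
    exact_mod_cast this
  rw [hA, hB, hvN, huN, sum_identity n]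
  set c := deriv Complex.Gamma 1 with hc
  set H1 := ∑ k ∈ Finset.Icc 1 n, 1/(k:ℂ) with hH1
  set H2 := ∑ k ∈ Finset.Icc 1 (2*n), 1/(k:ℂ) with hH2
  rw [div_eq_iff (pow_ne_zero 2 (pow_ne_zero 2 hFne))]
  linear_combination (-2 * (n.factorial:ℂ)^2 * (H1 - H2)) * hC
end

section
/- For every integer n ≥ 2, ζ_ℤ'(−n + 1/2) = (4^{2n}/(2π n)) · binom(2n,n)^{-1} · (−4 log 2 − ∑_{k=1}^{n−1} 1/k + 2 ∑_{k=1}^{n} 1/(2k−1)). -/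
open Complex Finset

local notation "γ" => Real.eulerMascheroniConstant

lemma cpi_half : (Real.pi : ℂ) ^ (1/2 : ℂ) = ((Real.sqrt Real.pi : ℝ) : ℂ) := by
  rw [Real.sqrt_eq_rpow, Complex.ofReal_cpow Real.pi_pos.le, Complex.ofReal_div,
    Complex.ofReal_one, Complex.ofReal_ofNat]

lemma cGamma_half : Complex.Gamma (1/2) = ((Real.sqrt Real.pi : ℝ) : ℂ) := by
  rw [Complex.Gamma_one_half_eq, cpi_half]

lemma half_ne_neg_nat (k : ℕ) : ∀ m : ℕ, (k:ℂ) + 1/2 ≠ -(m:ℂ) := by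
  intro m h
  have h1 : ((k:ℂ) + 1/2).re = (k:ℝ) + 1/2 := by simp
  rw [h] at h1
  simp only [Complex.neg_re, Complex.natCast_re] at h1
  have hk : (0:ℝ) ≤ (k:ℝ) := Nat.cast_nonneg k
  have hm : (0:ℝ) ≤ (m:ℝ) := Nat.cast_nonneg m
  linarith

lemma half_ne_zero' (k : ℕ) : (k:ℂ) + 1/2 ≠ 0 := by
  simpa using half_ne_neg_nat k 0

lemma Gamma_half_ne_zero (k : ℕ) : Complex.Gamma ((k:ℂ) + 1/2) ≠ 0 :=
  Complex.Gamma_ne_zero (half_ne_neg_nat k)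

lemma Gamma_half_succ (k : ℕ) :
    Complex.Gamma ((↑(k+1):ℂ) + 1/2) = ((k:ℂ)+1/2) * Complex.Gamma ((k:ℂ)+1/2) := by
  rw [← Complex.Gamma_add_one _ (half_ne_zero' k)]
  congr 1
  push_cast
  ring

lemma four_pow_mul_Gamma_half (k : ℕ) :
    (4:ℂ)^k * (Nat.factorial k : ℂ) * Complex.Gamma ((k:ℂ) + 1/2)
      = ((Nat.factorial (2*k)) : ℂ) * ((Real.sqrt Real.pi : ℝ) : ℂ) := by
  induction k with
  | zero => simpa using cGamma_half
  | succ k ih =>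
    rw [Gamma_half_succ]
    have h2 : ((Nat.factorial (2*(k+1))) : ℂ) = (2*(k:ℂ)+2) * (2*(k:ℂ)+1) * ((Nat.factorial (2*k)) : ℂ) := by
      have he : 2*(k+1) = (2*k+1) + 1 := by ring
      rw [he]
      rw [Nat.factorial_succ, Nat.factorial_succ]
      push_cast
      ring
    rw [h2, pow_succ, Nat.factorial_succ]
    push_cast
    linear_combination (4*((k:ℂ)+1)*((k:ℂ)+1/2)) * ih

lemma hasDerivAt_Gamma_half (k : ℕ) :
    HasDerivAt Complex.Gamma
      (Complex.Gamma ((k:ℂ) + 1/2) *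
        (-(γ:ℂ) - 2*(Real.log 2 : ℂ) + 2 * ∑ j ∈ Finset.Icc 1 k, 1/(2*(j:ℂ)-1)))
      ((k:ℂ) + 1/2) := by
  induction k with
  | zero =>
    have h0 : ((0:ℕ):ℂ) + 1/2 = (1/2 : ℂ) := by norm_num
    rw [h0]
    refine Complex.hasDerivAt_Gamma_one_half.congr_deriv ?_
    rw [cGamma_half]
    simp
    ring
  | succ k ih =>
    set x : ℂ := (k:ℂ) + 1/2 with hx
    have hxpt : (↑(k+1):ℂ) + 1/2 = x + 1 := by rw [hx]; push_cast; ring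
    have hG : Complex.Gamma (x+1) = x * Complex.Gamma x := by
      rw [← hxpt, Gamma_half_succ, hx]
    rw [hxpt, hG]
    -- derivative of s ↦ (s-1) * Gamma (s-1) at x+1
    have hsub : HasDerivAt (fun s : ℂ => s - 1) 1 (x+1) := (hasDerivAt_id _).sub_const 1
    have hGsub : HasDerivAt (fun s : ℂ => Complex.Gamma (s - 1))
        ((Complex.Gamma x *
          (-(γ:ℂ) - 2*(Real.log 2 : ℂ) + 2 * ∑ j ∈ Finset.Icc 1 k, 1/(2*(j:ℂ)-1))) * 1)
        (x+1) := by
      have hxx : x = x + 1 - 1 := by ring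
      have ih' := hxx ▸ ih
      simpa [Function.comp_def] using ih'.comp (x+1) hsub
    have hprod := hsub.mul hGsub
    have hev : (fun s : ℂ => s - 1) * (fun s => Complex.Gamma (s - 1)) =ᶠ[nhds (x+1)]
        Complex.Gamma := by
      have hne : x + 1 ≠ 1 := by
        intro h
        exact half_ne_zero' k (by rwa [add_eq_right] at h)
      filter_upwards [isOpen_ne.mem_nhds hne] with s hs
      have hs0 : s - 1 ≠ 0 := sub_ne_zero.mpr hs
      simp only [Pi.mul_apply]
      rw [← Complex.Gamma_add_one _ hs0]
      ring_nf
    have hfinal := (hprod.congr_of_eventuallyEq hev.symm)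
    refine hfinal.congr_deriv ?_
    have hsum : ∑ j ∈ Finset.Icc 1 (k+1), 1/(2*(j:ℂ)-1)
        = (∑ j ∈ Finset.Icc 1 k, 1/(2*(j:ℂ)-1)) + 1/(2*(↑(k+1):ℂ)-1) := by
      rw [Finset.sum_Icc_succ_top (Nat.le_add_left 1 k)]
    rw [hsum]
    have h1 : x + 1 - 1 = x := by ring
    rw [h1]
    have h2 : (2*((k:ℂ)+1)-1) ≠ 0 := by
      have he : (2*((k:ℂ)+1)-1) = ((2*k+1 : ℕ) : ℂ) := by push_cast; ring
      rw [he]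
      exact Nat.cast_ne_zero.mpr (by omega)
    push_cast
    field_simp
    ring

lemma hasDerivAt_Gamma_int (n : ℕ) (hn : 1 ≤ n) :
    HasDerivAt Complex.Gamma
      (Complex.Gamma (n:ℂ) * (-(γ:ℂ) + ∑ k ∈ Finset.Icc 1 (n-1), 1/(k:ℂ)))
      (n:ℂ) := by
  obtain ⟨m, rfl⟩ : ∃ m, n = m + 1 := ⟨n-1, by omega⟩
  have h := Complex.hasDerivAt_Gamma_nat m
  have hpt : ((m:ℂ) + 1) = (↑(m+1):ℂ) := by push_cast; ring
  rw [hpt] at h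
  refine h.congr_deriv ?_
  have hm1 : (m+1)-1 = m := by omega
  rw [hm1, ← hpt, Complex.Gamma_nat_eq_factorial]
  have hh : ((harmonic m : ℚ) : ℂ) = ∑ k ∈ Finset.Icc 1 m, 1/(k:ℂ) := by
    rw [harmonic_eq_sum_Icc]
    push_cast
    simp [one_div]
  rw [← hh]

set_option maxHeartbeats 1000000 in
theorem deriv_zetaZ_neg_half (n : ℕ) (hn : 2 ≤ n) :
    deriv zetaZ (-(n : ℂ) + 1/2)
      = (4:ℂ) ^ (2 * n) / (2 * (Real.pi : ℂ) * n) * (Nat.choose (2 * n) n : ℂ)⁻¹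
          * (-(4 * (Real.log 2 : ℂ)) - (∑ k ∈ Finset.Icc 1 (n - 1), 1 / (k : ℂ))
              + 2 * ∑ k ∈ Finset.Icc 1 n, 1 / (2 * (k : ℂ) - 1)) := by
  set s0 : ℂ := -(n : ℂ) + 1/2 with hs0
  have h12 : 1/2 - s0 = (n:ℂ) := by rw [hs0]; ring
  have h1 : 1 - s0 = (n:ℂ) + 1/2 := by rw [hs0]; ring
  -- numerator derivative
  have hinner : HasDerivAt (fun s : ℂ => 1/2 - s) (-1) s0 := (hasDerivAt_id s0).const_sub (1/2)
  have houter := hasDerivAt_Gamma_int n (by omega)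
  rw [← h12] at houter
  have hu := houter.comp s0 hinner
  -- denominator derivative
  have hinner1 : HasDerivAt (fun s : ℂ => 1 - s) (-1) s0 := (hasDerivAt_id s0).const_sub 1
  have houter1 := hasDerivAt_Gamma_half n
  rw [← h1] at houter1
  have hg1 := houter1.comp s0 hinner1
  have h4 : HasDerivAt (fun s : ℂ => (4:ℂ)^s) ((4:ℂ)^s0 * Complex.log 4 * 1) s0 :=
    (hasDerivAt_id s0).const_cpow (Or.inl (by norm_num))
  have hw := h4.mul_const ((Real.sqrt Real.pi : ℝ) : ℂ)
  have hv := hw.mul hg1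
  -- nonvanishing facts
  have hsq : ((Real.sqrt Real.pi : ℝ) : ℂ) ≠ 0 := by
    rw [Complex.ofReal_ne_zero]
    positivity
  have hc : (4:ℂ)^s0 = 2 / (4:ℂ)^n := by
    have hsplit : s0 = (1/2 : ℂ) + (-(n:ℂ)) := by rw [hs0]; ring
    rw [hsplit, Complex.cpow_add _ _ (by norm_num : (4:ℂ) ≠ 0)]
    have hhalf : (4:ℂ) ^ (1/2 : ℂ) = 2 := by
      have h4r : (4:ℝ) ^ (1/2:ℝ) = 2 := by
        rw [show (4:ℝ) = 2^(2:ℕ) by norm_num, ← Real.rpow_natCast 2 2,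
          ← Real.rpow_mul (by norm_num)]
        norm_num
      calc (4:ℂ)^(1/2:ℂ) = ((4:ℝ):ℂ) ^ (((1/2:ℝ):ℝ):ℂ) := by norm_num
        _ = (((4:ℝ)^(1/2:ℝ) : ℝ):ℂ) := (Complex.ofReal_cpow (by norm_num) _).symm
        _ = 2 := by rw [h4r]; norm_num
    rw [hhalf, Complex.cpow_neg, Complex.cpow_natCast]
    ring
  have h4n : ((4:ℂ))^n ≠ 0 := pow_ne_zero _ (by norm_num)
  have hcne : (4:ℂ)^s0 ≠ 0 := by
    rw [hc]
    exact div_ne_zero (by norm_num) h4n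
  have hGne : Complex.Gamma (1 - s0) ≠ 0 := by
    rw [h1]; exact Gamma_half_ne_zero n
  have hvne : (4:ℂ)^s0 * ((Real.sqrt Real.pi : ℝ) : ℂ) * Complex.Gamma (1 - s0) ≠ 0 :=
    mul_ne_zero (mul_ne_zero hcne hsq) hGne
  have hquot := hu.div hv hvne
  have hzeta : HasDerivAt zetaZ
      ((Complex.Gamma (1/2 - s0) * (-(γ:ℂ) + ∑ k ∈ Finset.Icc 1 (n-1), 1/(k:ℂ)) * (-1) *
          ((4:ℂ)^s0 * ((Real.sqrt Real.pi : ℝ) : ℂ) * Complex.Gamma (1 - s0)) -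
        Complex.Gamma (1/2 - s0) *
          ((4:ℂ)^s0 * Complex.log 4 * 1 * ((Real.sqrt Real.pi : ℝ) : ℂ) * Complex.Gamma (1 - s0) +
            (4:ℂ)^s0 * ((Real.sqrt Real.pi : ℝ) : ℂ) *
              (Complex.Gamma (1 - s0) *
                (-(γ:ℂ) - 2*(Real.log 2 : ℂ) + 2 * ∑ j ∈ Finset.Icc 1 n, 1/(2*(j:ℂ)-1)) * (-1)))) /
        ((4:ℂ)^s0 * ((Real.sqrt Real.pi : ℝ) : ℂ) * Complex.Gamma (1 - s0))^2) s0 := hquot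
  rw [hzeta.deriv]
  -- now pure algebra
  have hlog : Complex.log 4 = 2 * (Real.log 2 : ℂ) := by
    have hr : Real.log 4 = 2 * Real.log 2 := by
      rw [show (4:ℝ) = 2^(2:ℕ) by norm_num, Real.log_pow]
      push_cast
      ring
    rw [show (4:ℂ) = ((4:ℝ):ℂ) by norm_num, ← Complex.ofReal_log (by norm_num : (0:ℝ) ≤ 4), hr]
    push_cast
    ring
  have hA : Complex.Gamma (1/2 - s0) = (Nat.factorial (n-1) : ℂ) := by
    rw [h12, show (n:ℂ) = (↑(n-1):ℂ) + 1 by push_cast [Nat.cast_sub (by omega : 1 ≤ n)]; ring,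
      Complex.Gamma_nat_eq_factorial]
  have hB : Complex.Gamma (1 - s0)
      = (Nat.factorial (2*n) : ℂ) * ((Real.sqrt Real.pi : ℝ) : ℂ) /
          ((4:ℂ)^n * (Nat.factorial n : ℂ)) := by
    rw [h1, eq_div_iff (mul_ne_zero h4n (by exact_mod_cast Nat.factorial_ne_zero n))]
    linear_combination four_pow_mul_Gamma_half n
  have hchoose : (Nat.choose (2*n) n : ℂ)
      = (Nat.factorial (2*n) : ℂ) / ((Nat.factorial n : ℂ) * (Nat.factorial n : ℂ)) := by
    rw [eq_div_iff (mul_ne_zero (by exact_mod_cast Nat.factorial_ne_zero n)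
      (by exact_mod_cast Nat.factorial_ne_zero n))]
    have h := Nat.choose_mul_factorial_mul_factorial (by omega : n ≤ 2*n)
    rw [show 2*n - n = n by omega] at h
    rw [← mul_assoc]
    exact_mod_cast h
  have hfac : (Nat.factorial n : ℂ) = (n:ℂ) * (Nat.factorial (n-1) : ℂ) := by
    have := Nat.mul_factorial_pred (by omega : n ≠ 0)
    exact_mod_cast (congrArg (Nat.cast : ℕ → ℂ) this).symm
  have hpi : ((Real.sqrt Real.pi : ℝ) : ℂ) * ((Real.sqrt Real.pi : ℝ) : ℂ) = (Real.pi : ℂ) := by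
    rw [← Complex.ofReal_mul, Real.mul_self_sqrt Real.pi_pos.le]
  have hn0 : (n:ℂ) ≠ 0 := Nat.cast_ne_zero.mpr (by omega)
  have hfacn : (Nat.factorial n : ℂ) ≠ 0 := by exact_mod_cast Nat.factorial_ne_zero n
  have hfacn1 : (Nat.factorial (n-1) : ℂ) ≠ 0 := by exact_mod_cast Nat.factorial_ne_zero (n-1)
  have hfac2n : (Nat.factorial (2*n) : ℂ) ≠ 0 := by exact_mod_cast Nat.factorial_ne_zero (2*n)
  rw [hA, hB, hc, hlog, hchoose, show (4:ℂ)^(2*n) = (4:ℂ)^n * (4:ℂ)^n by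
    rw [two_mul, pow_add], hfac, ← hpi]
  set F := (Nat.factorial (n-1) : ℂ) with hF
  set T := (Nat.factorial (2*n) : ℂ) with hT
  set N := (n:ℂ) with hN
  set P := ((Real.sqrt Real.pi : ℝ) : ℂ) with hP
  set Q := (4:ℂ)^n with hQ
  set Lg := ((Real.log 2 : ℝ) : ℂ) with hLg
  set G := ((γ : ℝ) : ℂ) with hG
  set S1 := ∑ k ∈ Finset.Icc 1 (n-1), 1/(k:ℂ) with hS1
  set S2 := ∑ j ∈ Finset.Icc 1 n, 1/(2*(j:ℂ)-1) with hS2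
  clear_value F T N P Q Lg G S1 S2
  clear hF hT hN hP hQ hLg hG hS1 hS2 hA hB hc hchoose hfac hpi hzeta hquot hvne hGne hcne hv hw h4 hg1 houter1 hinner1 hu houter hinner h1 h12 hs0
  field_simp
  ring
end

section
/- For positive integers n and m, 2^{2m} ∑_{k=1}^{n−1} sin^{2m}(πk/n) = n · ∑_{k=−⌊m/n⌋}^{⌊m/n⌋} (−1)^{kn} binom(2m, m + kn). -/
open Complex Finset

lemma rou_filter (n : ℕ) (hn : 1 ≤ n) (t : ℤ) :
    ∑ k ∈ Finset.range n, Complex.exp (2 * Real.pi * I * t * k / n)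
      = if (n:ℤ) ∣ t then (n:ℂ) else 0 := by
  have hn0 : (n:ℂ) ≠ 0 := Nat.cast_ne_zero.mpr (by omega)
  have hx : ∀ k : ℕ, Complex.exp (2 * Real.pi * I * t * k / n)
      = Complex.exp (2 * Real.pi * I * t / n) ^ k := by
    intro k
    rw [← Complex.exp_nat_mul]; ring_nf
  simp_rw [hx]
  by_cases hd : (n:ℤ) ∣ t
  · obtain ⟨s, hs⟩ := hd
    have h1 : Complex.exp (2 * Real.pi * I * t / n) = 1 := by
      rw [show (2 * Real.pi * I * t / n : ℂ) = (s : ℤ) * (2 * Real.pi * I) by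
        rw [show ((t:ℂ)) = ((n:ℂ) * s) by exact_mod_cast congrArg (Int.cast : ℤ → ℂ) hs]
        field_simp]
      exact Complex.exp_int_mul_two_pi_mul_I s
    rw [if_pos ⟨s, hs⟩]
    simp [h1]
  · rw [if_neg hd]
    have h2 : (2 * Real.pi * I : ℂ) ≠ 0 := by
      simp [Real.pi_ne_zero, I_ne_zero, two_ne_zero]
    have hx1 : Complex.exp (2 * Real.pi * I * t / n) ≠ 1 := by
      intro h
      rw [Complex.exp_eq_one_iff] at h
      obtain ⟨q, hq⟩ := h
      apply hd
      refine ⟨q, ?_⟩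
      field_simp at hq
      have h3 : (2*Real.pi*I) * (t:ℂ) = (2*Real.pi*I) * ((n:ℂ)*q) := by
        linear_combination (2*Real.pi*I) * hq
      have := mul_left_cancel₀ h2 h3
      exact_mod_cast this
    rw [geom_sum_eq hx1]
    have h3 : Complex.exp (2 * Real.pi * I * t / n) ^ n = 1 := by
      rw [← Complex.exp_nat_mul,
        show ((n:ℂ) * (2 * Real.pi * I * t / n)) = (t:ℤ) * (2 * Real.pi * I) by
          field_simp]
      exact Complex.exp_int_mul_two_pi_mul_I t
    simp [h3]

lemma sin_pow_expand (x : ℂ) (m : ℕ) :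
    (2:ℂ)^(2*m) * (Complex.sin x)^(2*m)
      = ∑ j ∈ Finset.range (2*m+1),
          (-1:ℂ)^(m+j) * (Nat.choose (2*m) j) * Complex.exp (2 * ((m:ℂ) - j) * x * I) := by
  have h1 : (2:ℂ)^(2*m) * (Complex.sin x)^(2*m) = ((2:ℂ) * Complex.sin x)^(2*m) := by
    rw [mul_pow]
  rw [h1, show (2:ℂ) * Complex.sin x = (Complex.exp (-x*I) - Complex.exp (x*I)) * I by
    rw [Complex.sin]; ring]
  rw [mul_pow, sub_pow]
  rw [show (I:ℂ)^(2*m) = (-1:ℂ)^m by rw [pow_mul, I_sq]]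
  rw [Finset.sum_mul]
  refine Finset.sum_congr rfl fun j hj => ?_
  rw [Finset.mem_range] at hj
  have hj' : j ≤ 2*m := by omega
  rw [← Complex.exp_nat_mul, ← Complex.exp_nat_mul, mul_assoc ((-1:ℂ)^(j+2*m)),
    ← Complex.exp_add]
  rw [show ((j:ℂ) * (-x*I) + ((2*m - j : ℕ):ℂ) * (x*I)) = 2 * ((m:ℂ) - j) * x * I by
    rw [Nat.cast_sub hj']; push_cast; ring]
  rw [show ((-1:ℂ))^(j+2*m) = (-1)^j by rw [pow_add, pow_mul]; norm_num]
  rw [pow_add]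
  ring

lemma main_c (n m : ℕ) (hn : 1 ≤ n) (hm : 1 ≤ m) :
    (2:ℂ) ^ (2 * m) * ∑ k ∈ Finset.range n, Complex.sin ((Real.pi : ℂ) * k / n) ^ (2 * m)
      = n * ∑ k ∈ Finset.Icc (-((m / n : ℕ) : ℤ)) ((m / n : ℕ) : ℤ),
          (-1 : ℂ) ^ (k * n) * (Nat.choose (2 * m) ((m : ℤ) + k * n).toNat : ℂ) := by
  classical
  have hn0 : (n:ℂ) ≠ 0 := Nat.cast_ne_zero.mpr (by omega)
  have hnz : 0 < n := hn
  have hne : (n:ℤ) ≠ 0 := by omega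
  calc (2:ℂ) ^ (2*m) * ∑ k ∈ Finset.range n, Complex.sin ((Real.pi : ℂ) * k / n) ^ (2*m)
      = ∑ k ∈ Finset.range n, ∑ j ∈ Finset.range (2*m+1),
          (-1:ℂ)^(m+j) * (Nat.choose (2*m) j)
            * Complex.exp (2 * Real.pi * I * (((m:ℤ) - (j:ℕ) : ℤ) : ℂ) * k / n) := by
        rw [Finset.mul_sum]
        refine Finset.sum_congr rfl fun k hk => ?_
        rw [sin_pow_expand]
        refine Finset.sum_congr rfl fun j hj => ?_
        congr 1
        push_cast
        ring
    _ = ∑ j ∈ Finset.range (2*m+1), (-1:ℂ)^(m+j) * (Nat.choose (2*m) j)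
          * (if (n:ℤ) ∣ ((m:ℤ) - (j:ℕ)) then (n:ℂ) else 0) := by
        rw [Finset.sum_comm]
        refine Finset.sum_congr rfl fun j hj => ?_
        rw [← rou_filter n hn ((m:ℤ) - (j:ℕ)), Finset.mul_sum]
    _ = ∑ j ∈ (Finset.range (2*m+1)).filter (fun j : ℕ => (n:ℤ) ∣ ((m:ℤ) - (j:ℕ))),
          (-1:ℂ)^(m+j) * (Nat.choose (2*m) j) * (n:ℂ) := by
        rw [Finset.sum_filter]
        refine Finset.sum_congr rfl fun j hj => ?_
        split_ifs <;> simp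
    _ = ∑ t ∈ Finset.Icc (-((m / n : ℕ) : ℤ)) ((m / n : ℕ) : ℤ),
          (n:ℂ) * ((-1 : ℂ) ^ (t * (n:ℕ)) * (Nat.choose (2*m) ((m : ℤ) + t * (n:ℕ)).toNat : ℂ)) := by
        refine Finset.sum_nbij' (fun j : ℕ => (((j:ℕ):ℤ) - (m:ℤ)) / (n:ℤ))
          (fun t : ℤ => ((m:ℤ) + t * (n:ℤ)).toNat) ?_ ?_ ?_ ?_ ?_
        · intro j hj
          simp only [Finset.mem_filter, Finset.mem_range] at hj
          obtain ⟨hj1, hd⟩ := hj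
          obtain ⟨t, ht⟩ : (n:ℤ) ∣ ((j:ℤ) - m) := by
            obtain ⟨s, hs⟩ := hd; exact ⟨-s, by rw [mul_neg]; omega⟩
          have hdiv : ((j:ℤ) - m) / n = t := by
            rw [ht, Int.mul_ediv_cancel_left _ hne]
          have h6 : ((n:ℤ) * t).natAbs = n * t.natAbs := by
            simp [Int.natAbs_mul]
          have h8 : n * t.natAbs ≤ m := by
            rw [← h6, ← ht]; omega
          have h9 : t.natAbs ≤ m / n :=
            (Nat.le_div_iff_mul_le hnz).mpr (by rw [mul_comm]; exact h8)
          simp only [Finset.mem_Icc, hdiv]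
          omega
        · intro t ht
          simp only [Finset.mem_Icc] at ht
          have h9 : t.natAbs ≤ m / n := by omega
          have h8 : n * t.natAbs ≤ m := by
            calc n * t.natAbs ≤ n * (m / n) := Nat.mul_le_mul_left _ h9
            _ ≤ m := Nat.mul_div_le m n
          have h6 : ((n:ℤ) * t).natAbs = n * t.natAbs := by simp [Int.natAbs_mul]
          have hcomm : t * (n:ℤ) = (n:ℤ) * t := mul_comm _ _
          simp only [Finset.mem_filter, Finset.mem_range]
          constructor
          · omega
          · exact ⟨-t, by rw [mul_neg]; omega⟩
        · intro j hj
          simp only [Finset.mem_filter, Finset.mem_range] at hj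
          obtain ⟨hj1, hd⟩ := hj
          obtain ⟨t, ht⟩ : (n:ℤ) ∣ ((j:ℤ) - m) := by
            obtain ⟨s, hs⟩ := hd; exact ⟨-s, by rw [mul_neg]; omega⟩
          have hdiv : ((j:ℤ) - m) / n = t := by
            rw [ht, Int.mul_ediv_cancel_left _ hne]
          show ((m:ℤ) + ((j:ℤ) - m) / n * n).toNat = j
          rw [hdiv]
          have hcomm : t * (n:ℤ) = (n:ℤ) * t := mul_comm _ _
          omega
        · intro t ht
          simp only [Finset.mem_Icc] at ht
          have h9 : t.natAbs ≤ m / n := by omega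
          have h8 : n * t.natAbs ≤ m := by
            calc n * t.natAbs ≤ n * (m / n) := Nat.mul_le_mul_left _ h9
            _ ≤ m := Nat.mul_div_le m n
          have h6 : ((n:ℤ) * t).natAbs = n * t.natAbs := by simp [Int.natAbs_mul]
          have hcomm : t * (n:ℤ) = (n:ℤ) * t := mul_comm _ _
          have hnn : (0:ℤ) ≤ (m:ℤ) + t*n := by omega
          have hcast : ((((m:ℤ) + t*(n:ℤ)).toNat : ℤ)) = (m:ℤ) + t*n := Int.toNat_of_nonneg hnn
          show (((((m:ℤ) + t*(n:ℤ)).toNat : ℕ) : ℤ) - (m:ℤ)) / (n:ℤ) = t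
          rw [hcast, show ((m:ℤ) + t*(n:ℤ) - m) = (n:ℤ) * t by ring,
            Int.mul_ediv_cancel_left _ hne]
        · intro j hj
          simp only [Finset.mem_filter, Finset.mem_range] at hj
          obtain ⟨hj1, hd⟩ := hj
          obtain ⟨t, ht⟩ : (n:ℤ) ∣ ((j:ℤ) - m) := by
            obtain ⟨s, hs⟩ := hd; exact ⟨-s, by rw [mul_neg]; omega⟩
          have hdiv : ((j:ℤ) - m) / n = t := by
            rw [ht, Int.mul_ediv_cancel_left _ hne]
          have hcomm : t * (n:ℤ) = (n:ℤ) * t := mul_comm _ _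
          show (-1:ℂ)^(m+j) * (Nat.choose (2*m) j) * (n:ℂ)
            = (n:ℂ) * ((-1 : ℂ) ^ ((((j:ℤ) - m) / n) * (n:ℕ))
                * (Nat.choose (2*m) ((m : ℤ) + (((j:ℤ) - m) / n) * (n:ℕ)).toNat : ℂ))
          rw [hdiv]
          have hj2 : ((m:ℤ) + t * n).toNat = j := by omega
          rw [hj2]
          have hsign : ((-1:ℂ))^(m+j) = (-1:ℂ)^(t * (n:ℤ)) := by
            have e1 : ((-1:ℂ))^(m+j) = (-1:ℂ)^((m+j : ℕ) : ℤ) := (zpow_natCast _ _).symm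
            have e2 : ((m+j:ℕ):ℤ) = 2*(m:ℤ) + t*n := by omega
            rw [e1, e2, zpow_add₀ (by norm_num : (-1:ℂ) ≠ 0)]
            rw [show (2*(m:ℤ)) = ((2*m : ℕ) : ℤ) by push_cast; ring, zpow_natCast]
            rw [show ((-1:ℂ))^(2*m) = 1 by rw [pow_mul]; norm_num]
            rw [one_mul]
          rw [hsign]
          ring
    _ = n * ∑ k ∈ Finset.Icc (-((m / n : ℕ) : ℤ)) ((m / n : ℕ) : ℤ),
          (-1 : ℂ) ^ (k * n) * (Nat.choose (2 * m) ((m : ℤ) + k * n).toNat : ℂ) := by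
        rw [Finset.mul_sum]

theorem sin_even_power_sum (n m : ℕ) (hn : 1 ≤ n) (hm : 1 ≤ m) :
    (2:ℝ) ^ (2 * m) * ∑ k ∈ Finset.Icc 1 (n - 1), Real.sin (Real.pi * k / n) ^ (2 * m)
      = n * ∑ k ∈ Finset.Icc (-((m / n : ℕ) : ℤ)) ((m / n : ℕ) : ℤ),
          (-1 : ℝ) ^ (k * n) * (Nat.choose (2 * m) ((m : ℤ) + k * n).toNat : ℝ) := by
  have h0 : ∑ k ∈ Finset.Icc 1 (n - 1), Real.sin (Real.pi * k / n) ^ (2 * m)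
      = ∑ k ∈ Finset.range n, Real.sin (Real.pi * k / n) ^ (2 * m) := by
    have hIcc : Finset.Icc 1 (n-1) = Finset.Ico 1 n := by
      rw [← Finset.Ico_add_one_right_eq_Icc]; congr 1; omega
    rw [hIcc, Finset.range_eq_Ico, Finset.sum_eq_sum_Ico_succ_bot (by omega : 0 < n)]
    simp [zero_pow (by omega : 2 * m ≠ 0)]
  rw [h0, ← Complex.ofReal_inj]
  push_cast [Complex.ofReal_sin]
  convert main_c n m hn hm using 2
  rw [Int.natCast_div]
end

section
/- For positive integers n and m with m < n, 2^{2m} ∑_{k=1}^{n−1} sin^{2m}(πk/n) = n · binom(2m, m). -/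
open Complex Finset

theorem sin_even_power_sum_small (n m : ℕ) (hn : 1 ≤ n) (hm : 1 ≤ m) (hmn : m < n) :
    (2:ℝ) ^ (2 * m) * ∑ k ∈ Finset.Icc 1 (n - 1), Real.sin (Real.pi * k / n) ^ (2 * m)
      = n * (Nat.choose (2 * m) m : ℝ) := by
  have hn0 : (n:ℂ) ≠ 0 := Nat.cast_ne_zero.mpr (by omega)
  have hnR0 : (n:ℝ) ≠ 0 := Nat.cast_ne_zero.mpr (by omega)
  set ζ : ℂ := Complex.exp (2 * Real.pi * Complex.I / n) with hζdef
  have hζ : IsPrimitiveRoot ζ n := Complex.isPrimitiveRoot_exp n (by omega)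
  have hζn : ζ ^ n = 1 := hζ.pow_eq_one
  -- per-k expansion
  have key : ∀ k : ℕ,
      ((2:ℂ) * (Real.sin (Real.pi * k / n) : ℝ)) ^ (2*m)
        = ∑ j ∈ Finset.range (2*m+1),
            (-1:ℂ)^(j+m) * ((2*m).choose j : ℂ) * (ζ ^ ((m:ℤ) - j)) ^ k := by
    intro k
    set z : ℂ := ((Real.pi * k / n : ℝ) : ℂ) with hz
    have h2s : (2:ℂ) * (Real.sin (Real.pi * k / n) : ℝ)
        = (Complex.exp (-z * Complex.I) - Complex.exp (z * Complex.I)) * Complex.I := by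
      rw [Complex.ofReal_sin, Complex.sin]; ring
    rw [h2s, mul_pow, sub_pow, Finset.sum_mul]
    refine Finset.sum_congr rfl (fun j hj => ?_)
    have hjle : j ≤ 2*m := by simpa using Nat.lt_succ_iff.mp (Finset.mem_range.mp hj)
    have hI : (Complex.I) ^ (2*m) = (-1:ℂ)^m := by
      rw [pow_mul, Complex.I_sq]
    have hexp : Complex.exp (-z * Complex.I) ^ j * Complex.exp (z * Complex.I) ^ (2*m - j)
        = (ζ ^ ((m:ℤ) - j)) ^ k := by
      rw [← Complex.exp_nat_mul, ← Complex.exp_nat_mul, ← Complex.exp_add]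
      rw [hζdef, ← Complex.exp_int_mul, ← Complex.exp_nat_mul]
      congr 1
      have : ((2*m - j : ℕ) : ℂ) = 2*m - j := by
        push_cast [Nat.cast_sub hjle]; ring
      rw [this, hz]
      push_cast
      field_simp
      ring
    have hsign : ((-1:ℂ))^(j+2*m) * (-1:ℂ)^m = (-1:ℂ)^(j+m) := by
      rw [pow_add, pow_add, pow_mul]
      ring_nf
    calc (-1:ℂ)^(j+2*m) * Complex.exp (-z * Complex.I) ^ j *
            Complex.exp (z * Complex.I) ^ (2*m - j) * ((2*m).choose j : ℂ) * Complex.I ^ (2*m)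
        = ((-1:ℂ)^(j+2*m) * (-1:ℂ)^m) * ((2*m).choose j : ℂ) *
            (Complex.exp (-z * Complex.I) ^ j * Complex.exp (z * Complex.I) ^ (2*m - j)) := by
          rw [hI]; ring
      _ = (-1:ℂ)^(j+m) * ((2*m).choose j : ℂ) * (ζ ^ ((m:ℤ) - j)) ^ k := by
          rw [hsign, hexp]
  -- geometric sums
  have geo : ∀ j ∈ Finset.range (2*m+1),
      ∑ k ∈ Finset.range n, (ζ ^ ((m:ℤ) - j)) ^ k = if j = m then (n:ℂ) else 0 := by
    intro j hj
    have hjle : j ≤ 2*m := Nat.lt_succ_iff.mp (Finset.mem_range.mp hj)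
    by_cases h : j = m
    · subst h; simp
    · have hd : ¬ ((n:ℤ) ∣ ((m:ℤ) - j)) := by
        intro hdvd
        have h0 : ((m:ℤ) - j) = 0 :=
          Int.eq_zero_of_abs_lt_dvd hdvd (by
            rw [abs_lt]; constructor <;> omega)
        omega
      have hw1 : ζ ^ ((m:ℤ) - j) ≠ 1 := fun h1 => hd ((hζ.zpow_eq_one_iff_dvd _).mp h1)
      have hwn : (ζ ^ ((m:ℤ) - j)) ^ n = 1 := by
        rw [← zpow_natCast, ← zpow_mul, mul_comm, zpow_mul, zpow_natCast, hζn, one_zpow]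
      rw [geom_sum_eq hw1, hwn]
      simp [h]
  -- complex statement over full range
  have main : ∑ k ∈ Finset.range n, ((2:ℂ) * (Real.sin (Real.pi * k / n) : ℝ)) ^ (2*m)
      = (n:ℂ) * ((2*m).choose m : ℂ) := by
    calc ∑ k ∈ Finset.range n, ((2:ℂ) * (Real.sin (Real.pi * k / n) : ℝ)) ^ (2*m)
        = ∑ k ∈ Finset.range n, ∑ j ∈ Finset.range (2*m+1),
            (-1:ℂ)^(j+m) * ((2*m).choose j : ℂ) * (ζ ^ ((m:ℤ) - j)) ^ k :=
          Finset.sum_congr rfl (fun k _ => key k)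
      _ = ∑ j ∈ Finset.range (2*m+1), (-1:ℂ)^(j+m) * ((2*m).choose j : ℂ) *
            ∑ k ∈ Finset.range n, (ζ ^ ((m:ℤ) - j)) ^ k := by
          rw [Finset.sum_comm]
          exact Finset.sum_congr rfl (fun j _ => by rw [Finset.mul_sum])
      _ = ∑ j ∈ Finset.range (2*m+1), (-1:ℂ)^(j+m) * ((2*m).choose j : ℂ) *
            (if j = m then (n:ℂ) else 0) :=
          Finset.sum_congr rfl (fun j hj => by rw [geo j hj])
      _ = (n:ℂ) * ((2*m).choose m : ℂ) := by
          rw [Finset.sum_eq_single m]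
          · rw [if_pos rfl, show m + m = 2*m from by ring, pow_mul]
            norm_num; ring
          · intro j _ hj; simp [hj]
          · intro h; exact absurd (Finset.mem_range.mpr (by omega)) h
  -- restrict to Icc
  have hins : Finset.range n = insert 0 (Finset.Icc 1 (n-1)) := by
    ext x; simp only [Finset.mem_range, Finset.mem_insert, Finset.mem_Icc]; omega
  have h0notin : (0:ℕ) ∉ Finset.Icc 1 (n-1) := by simp
  have main2 : ∑ k ∈ Finset.Icc 1 (n-1), ((2:ℂ) * (Real.sin (Real.pi * k / n) : ℝ)) ^ (2*m)
      = (n:ℂ) * ((2*m).choose m : ℂ) := by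
    rw [← main, hins, Finset.sum_insert h0notin]
    simp [pow_eq_zero_iff]
    omega
  -- deduce the real statement
  have goalC : ((2:ℝ) ^ (2 * m) * ∑ k ∈ Finset.Icc 1 (n - 1),
        Real.sin (Real.pi * k / n) ^ (2 * m) : ℝ)
      = ((n * (Nat.choose (2 * m) m : ℝ) : ℝ)) := by
    have := main2
    rw [show ((n:ℂ) * ((2*m).choose m : ℂ)) = (((n * (Nat.choose (2*m) m : ℝ)) : ℝ) : ℂ) by push_cast; ring] at this
    have lhs : ∑ k ∈ Finset.Icc 1 (n-1), ((2:ℂ) * (Real.sin (Real.pi * k / n) : ℝ)) ^ (2*m)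
        = (((2:ℝ) ^ (2 * m) * ∑ k ∈ Finset.Icc 1 (n - 1),
            Real.sin (Real.pi * k / n) ^ (2 * m) : ℝ) : ℂ) := by
      push_cast
      rw [Finset.mul_sum]
      exact Finset.sum_congr rfl (fun k _ => by rw [mul_pow])
    rw [lhs] at this
    exact_mod_cast this
  exact goalC
end

section
/- For positive integers n and m, ∑_{k=1}^{n−1} sin^{2m+1}(πk/n) = (1/2^{2m}) ∑_{j=0}^{m} (−1)^{m−j} binom(2m+1, j) cot(π(2m+1−2j)/(2n)). -/
open Finset

/-- exp(a z I) - exp(-(a z I)) = 2 I sin(a z), phrased via powers of e = exp(z I). -/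
lemma exp_pow_sub_inv (z : ℂ) (a : ℕ) :
    Complex.exp (z * Complex.I) ^ a - (Complex.exp (z * Complex.I) ^ a)⁻¹
      = 2 * Complex.I * Complex.sin ((a : ℂ) * z) := by
  have h1 : Complex.exp (z * Complex.I) ^ a = Complex.exp ((a : ℂ) * z * Complex.I) := by
    rw [mul_assoc, Complex.exp_nat_mul]
  have h2 : (Complex.exp (z * Complex.I) ^ a)⁻¹ = Complex.exp (-((a : ℂ) * z) * Complex.I) := by
    rw [h1, ← Complex.exp_neg]; ring_nf
  rw [h2, h1]
  have h3 := Complex.two_sin ((a : ℂ) * z)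
  have hI := Complex.I_sq
  linear_combination (-Complex.I) * h3 + (Complex.exp ((a : ℂ) * z * Complex.I)
    - Complex.exp (-((a : ℂ) * z) * Complex.I)) * hI

/-- Binomial expansion of (e - e⁻¹)^(2m+1), paired into m+1 terms. -/
lemma key_expand (m : ℕ) {e : ℂ} (he : e ≠ 0) :
    (e - e⁻¹) ^ (2 * m + 1) = ∑ j ∈ range (m + 1),
      ((2 * m + 1).choose j : ℂ) * (-1) ^ j * (e ^ (2 * (m - j) + 1) - (e ^ (2 * (m - j) + 1))⁻¹) := by
  rw [sub_pow]
  rw [show 2 * m + 1 + 1 = (m + 1) + (m + 1) by ring, Finset.sum_range_add]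
  rw [← Finset.sum_range_reflect (fun k => (-1 : ℂ) ^ (k + (2 * m + 1)) * e ^ k *
      (e⁻¹) ^ (2 * m + 1 - k) * ((2 * m + 1).choose k)) (m + 1)]
  rw [← Finset.sum_range_reflect (fun j => ((2 * m + 1).choose j : ℂ) * (-1) ^ j *
      (e ^ (2 * (m - j) + 1) - (e ^ (2 * (m - j) + 1))⁻¹)) (m + 1)]
  rw [← Finset.sum_add_distrib]
  apply Finset.sum_congr rfl
  intro i hi
  rw [Finset.mem_range] at hi
  have him : i ≤ m := by omega
  have e1 : m + 1 - 1 - i = m - i := by omega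
  rw [e1]
  have hc : ((2 * m + 1).choose (m + 1 + i)) = ((2 * m + 1).choose (m - i)) := by
    rw [show m + 1 + i = 2 * m + 1 - (m - i) by omega, Nat.choose_symm (by omega)]
  rw [hc]
  have e2 : 2 * m + 1 - (m - i) = m + 1 + i := by omega
  have e3 : 2 * m + 1 - (m + 1 + i) = m - i := by omega
  rw [e2, e3]
  have e4 : 2 * (m - (m - i)) + 1 = 2 * i + 1 := by omega
  rw [e4]
  -- normalize signs to (-1)^(m+i)
  have s1 : (-1 : ℂ) ^ (m - i + (2 * m + 1)) = -(-1 : ℂ) ^ (m + i) := by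
    rw [show m - i + (2 * m + 1) = (m + i + 1) + 2 * (m - i) by omega, pow_add, pow_mul,
      neg_one_sq, one_pow, mul_one, pow_succ]
    ring
  have s2 : (-1 : ℂ) ^ (m + 1 + i + (2 * m + 1)) = (-1 : ℂ) ^ (m + i) := by
    rw [show m + 1 + i + (2 * m + 1) = (m + i) + 2 * (m + 1) by omega, pow_add, pow_mul,
      neg_one_sq, one_pow, mul_one]
  have s3 : (-1 : ℂ) ^ (m - i) = (-1 : ℂ) ^ (m + i) := by
    rw [show m + i = (m - i) + 2 * i by omega, pow_add, pow_mul, neg_one_sq, one_pow, mul_one]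
  rw [s1, s2, s3]
  -- rewrite powers of e
  have p1 : e ^ (m + 1 + i) = e ^ (m - i) * e ^ (2 * i + 1) := by
    rw [← pow_add]; congr 1; omega
  have p2 : (e⁻¹) ^ (m + 1 + i) = (e ^ (m - i))⁻¹ * (e ^ (2 * i + 1))⁻¹ := by
    rw [inv_pow, p1, mul_inv]
  rw [p1, p2, inv_pow]
  have hA : e ^ (m - i) ≠ 0 := pow_ne_zero _ he
  have hB : e ^ (2 * i + 1) ≠ 0 := pow_ne_zero _ he
  field_simp
  ring

/-- Power reduction for odd powers of complex sine. -/
lemma sin_pow_odd_complex (m : ℕ) (z : ℂ) :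
    (-4 : ℂ) ^ m * Complex.sin z ^ (2 * m + 1) = ∑ j ∈ range (m + 1),
      (-1 : ℂ) ^ j * ((2 * m + 1).choose j : ℂ) * Complex.sin (((2 * (m - j) + 1 : ℕ) : ℂ) * z) := by
  set e := Complex.exp (z * Complex.I) with hedef
  have he : e ≠ 0 := Complex.exp_ne_zero _
  have h1 : e - e⁻¹ = 2 * Complex.I * Complex.sin z := by
    have := exp_pow_sub_inv z 1
    simpa using this
  have h2 : (e - e⁻¹) ^ (2 * m + 1) = (2 * Complex.I) ^ (2 * m + 1) * Complex.sin z ^ (2 * m + 1) := by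
    rw [h1, mul_pow]
  have h3 : (2 * Complex.I) ^ (2 * m + 1) = (-4 : ℂ) ^ m * (2 * Complex.I) := by
    rw [pow_succ, pow_mul]
    congr 2
    rw [mul_pow, Complex.I_sq]
    norm_num
  have h4 := key_expand m he
  rw [h2, h3] at h4
  have h5 : ∑ j ∈ range (m + 1),
      ((2 * m + 1).choose j : ℂ) * (-1) ^ j * (e ^ (2 * (m - j) + 1) - (e ^ (2 * (m - j) + 1))⁻¹)
      = 2 * Complex.I * ∑ j ∈ range (m + 1),
        (-1 : ℂ) ^ j * ((2 * m + 1).choose j : ℂ) * Complex.sin (((2 * (m - j) + 1 : ℕ) : ℂ) * z) := by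
    rw [Finset.mul_sum]
    apply Finset.sum_congr rfl
    intro j _
    rw [exp_pow_sub_inv z (2 * (m - j) + 1)]
    ring
  rw [h5] at h4
  have hI : (2 : ℂ) * Complex.I ≠ 0 := by
    simp [Complex.I_ne_zero]
  apply mul_left_cancel₀ hI
  linear_combination h4

/-- Power reduction for odd powers of real sine. -/
lemma sin_pow_odd_real (m : ℕ) (x : ℝ) :
    (-4 : ℝ) ^ m * Real.sin x ^ (2 * m + 1) = ∑ j ∈ range (m + 1),
      (-1 : ℝ) ^ j * ((2 * m + 1).choose j : ℝ) * Real.sin ((2 * (m - j) + 1 : ℕ) * x) := by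
  have h := sin_pow_odd_complex m (x : ℂ)
  exact_mod_cast h

/-- Telescoping sum for ∑ sin(k x). -/
lemma sin_sum_telescope (x : ℝ) (n : ℕ) :
    (∑ k ∈ range n, Real.sin (k * x)) * Real.sin (x / 2)
      = (Real.cos (x / 2) - Real.cos ((2 * (n : ℝ) - 1) * x / 2)) / 2 := by
  induction n with
  | zero =>
    have h : (2 * ((0 : ℕ) : ℝ) - 1) * x / 2 = -(x / 2) := by push_cast; ring
    rw [Finset.range_zero, Finset.sum_empty, h, Real.cos_neg]
    ring
  | succ n ih =>
    rw [Finset.sum_range_succ, add_mul, ih]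
    have h := Real.cos_sub_cos ((2 * (n : ℝ) - 1) * x / 2) ((2 * ((n : ℕ) + 1 : ℝ) - 1) * x / 2)
    have h2 : ((2 * (n : ℝ) - 1) * x / 2 + (2 * ((n : ℕ) + 1 : ℝ) - 1) * x / 2) / 2 = n * x := by
      ring
    have h3 : ((2 * (n : ℝ) - 1) * x / 2 - (2 * ((n : ℕ) + 1 : ℝ) - 1) * x / 2) / 2 = -(x / 2) := by
      ring
    rw [h2, h3, Real.sin_neg] at h
    push_cast
    push_cast at h
    linarith
/-- Sum of sines at odd multiples: ∑_{k<n} sin(k (2t+1)π/n) = cot((2t+1)π/(2n)). -/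
lemma sin_sum_odd (t n : ℕ) (hn : 1 ≤ n) :
    ∑ k ∈ range n, Real.sin ((k : ℝ) * ((2 * t + 1) * Real.pi / n))
      = Real.cot ((2 * t + 1) * Real.pi / (2 * n)) := by
  set x := (2 * (t : ℝ) + 1) * Real.pi / n with hx
  have hn0 : (n : ℝ) ≠ 0 := by positivity
  have hx2 : x / 2 = (2 * (t : ℝ) + 1) * Real.pi / (2 * n) := by rw [hx]; ring
  have hs : Real.sin (x / 2) ≠ 0 := by
    rw [hx2]
    intro h
    rw [Real.sin_eq_zero_iff] at h
    obtain ⟨c, hc⟩ := h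
    have hpi : Real.pi ≠ 0 := Real.pi_ne_zero
    have h2 : ((c : ℝ) * (2 * n) - (2 * t + 1)) * Real.pi = 0 := by
      field_simp at hc
      linear_combination Real.pi * hc
    have h3 : (c : ℝ) * (2 * n) - (2 * t + 1) = 0 := by
      rcases mul_eq_zero.mp h2 with h | h
      · exact h
      · exact absurd h hpi
    have h4 : (c : ℝ) * (2 * n) = 2 * t + 1 := by linarith
    have hz : c * (2 * (n : ℤ)) = 2 * (t : ℤ) + 1 := by exact_mod_cast h4
    have hdvd : (2 : ℤ) ∣ 2 * (t : ℤ) + 1 := hz ▸ ⟨c * n, by ring⟩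
    omega
  have hcos : Real.cos ((2 * (n : ℝ) - 1) * x / 2) = -Real.cos (x / 2) := by
    have harg : (2 * (n : ℝ) - 1) * x / 2 = ((t : ℤ) * (2 * Real.pi) + Real.pi) - x / 2 := by
      rw [hx]; push_cast; field_simp
    rw [harg, Real.cos_sub, Real.cos_int_mul_two_pi_add_pi]
    have hsinpi : Real.sin ((t : ℤ) * (2 * Real.pi) + Real.pi) = 0 := by
      have := Real.sin_int_mul_pi (2 * t + 1 : ℤ)
      convert this using 2
      push_cast
      ring
    rw [hsinpi]
    ring
  have ht := sin_sum_telescope x n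
  rw [hcos] at ht
  have hsum : (∑ k ∈ range n, Real.sin (k * x)) = Real.cos (x / 2) / Real.sin (x / 2) := by
    rw [eq_div_iff hs]
    rw [ht]
    ring
  rw [← hx2, Real.cot_eq_cos_div_sin, ← hsum]

theorem sin_odd_power_sum (n m : ℕ) (hn : 1 ≤ n) (hm : 1 ≤ m) :
    ∑ k ∈ Finset.Icc 1 (n - 1), Real.sin (Real.pi * k / n) ^ (2 * m + 1)
      = (1 / (2:ℝ) ^ (2 * m)) * ∑ j ∈ Finset.range (m + 1),
          (-1 : ℝ) ^ (m - j) * (Nat.choose (2 * m + 1) j : ℝ)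
            * Real.cot (Real.pi * (2 * (m : ℝ) + 1 - 2 * j) / (2 * n)) := by
  have h4 : ((-4 : ℝ)) ^ m ≠ 0 := by
    apply pow_ne_zero; norm_num
  apply mul_left_cancel₀ h4
  have hstep1 : ∑ k ∈ Finset.Icc 1 (n - 1), Real.sin (Real.pi * k / n) ^ (2 * m + 1)
      = ∑ k ∈ Finset.range n, Real.sin (Real.pi * k / n) ^ (2 * m + 1) := by
    have hins : Finset.range n = insert 0 (Finset.Icc 1 (n - 1)) := by
      ext a
      simp only [Finset.mem_range, Finset.mem_insert, Finset.mem_Icc]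
      omega
    rw [hins, Finset.sum_insert (by simp)]
    simp
  rw [hstep1, Finset.mul_sum]
  calc ∑ k ∈ range n, (-4 : ℝ) ^ m * Real.sin (Real.pi * k / n) ^ (2 * m + 1)
      = ∑ k ∈ range n, ∑ j ∈ range (m + 1), (-1 : ℝ) ^ j * ((2 * m + 1).choose j : ℝ)
          * Real.sin ((2 * (m - j) + 1 : ℕ) * (Real.pi * k / n)) :=
        Finset.sum_congr rfl fun k _ => sin_pow_odd_real m _
    _ = ∑ j ∈ range (m + 1), ∑ k ∈ range n, (-1 : ℝ) ^ j * ((2 * m + 1).choose j : ℝ)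
          * Real.sin ((2 * (m - j) + 1 : ℕ) * (Real.pi * k / n)) := Finset.sum_comm
    _ = ∑ j ∈ range (m + 1), (-1 : ℝ) ^ j * ((2 * m + 1).choose j : ℝ)
          * Real.cot (Real.pi * (2 * (m : ℝ) + 1 - 2 * j) / (2 * n)) := by
        apply Finset.sum_congr rfl
        intro j hj
        rw [Finset.mem_range] at hj
        have hjm : j ≤ m := by omega
        rw [← Finset.mul_sum]
        congr 1
        have h1 := sin_sum_odd (m - j) n hn
        calc ∑ k ∈ range n, Real.sin ((2 * (m - j) + 1 : ℕ) * (Real.pi * k / n))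
            = ∑ k ∈ range n, Real.sin ((k : ℝ) * ((2 * ((m - j : ℕ) : ℝ) + 1) * Real.pi / n)) := by
              apply Finset.sum_congr rfl
              intro k _
              congr 1
              push_cast
              ring
          _ = Real.cot ((2 * ((m - j : ℕ) : ℝ) + 1) * Real.pi / (2 * n)) := h1
          _ = Real.cot (Real.pi * (2 * (m : ℝ) + 1 - 2 * j) / (2 * n)) := by
              congr 1
              rw [Nat.cast_sub hjm]
              ring
    _ = (-4 : ℝ) ^ m * ((1 / (2 : ℝ) ^ (2 * m)) * ∑ j ∈ Finset.range (m + 1),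
          (-1 : ℝ) ^ (m - j) * ((2 * m + 1).choose j : ℝ)
            * Real.cot (Real.pi * (2 * (m : ℝ) + 1 - 2 * j) / (2 * n))) := by
        rw [Finset.mul_sum, Finset.mul_sum]
        apply Finset.sum_congr rfl
        intro j hj
        rw [Finset.mem_range] at hj
        have hjm : j ≤ m := by omega
        have hsign : (-1 : ℝ) ^ m * (-1 : ℝ) ^ (m - j) = (-1 : ℝ) ^ j := by
          rw [← pow_add, show m + (m - j) = j + 2 * (m - j) by omega, pow_add, pow_mul,
            neg_one_sq, one_pow, mul_one]
        have h4m : (-4 : ℝ) ^ m = (-1 : ℝ) ^ m * 2 ^ (2 * m) := by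
          rw [show (-4 : ℝ) = (-1) * 2 ^ 2 by norm_num, mul_pow, ← pow_mul]
        rw [h4m]
        have h2m : (2 : ℝ) ^ (2 * m) ≠ 0 := by positivity
        field_simp
        linear_combination (-((2 * m + 1).choose j : ℝ)
          * Real.cot (Real.pi * (2 * (m : ℝ) + 1 - 2 * j) / (2 * n))) * hsign
end

section
/- For every integer n ≥ 1, (1/4) ∑_{k=1}^{n−1} 1/sin^2(πk/n) = (n^2 − 1)/12. -/
open Finset Complex

private lemma sum_id_c (z : ℂ) (m : ℕ) :
    (1 - z) * ∑ j ∈ range m, (j : ℂ) * z ^ j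
      = (∑ j ∈ range m, z ^ j) - 1 - ((m : ℂ) - 1) * z ^ m := by
  induction m with
  | zero => simp
  | succ m ih =>
    rw [sum_range_succ, sum_range_succ, mul_add, ih]
    push_cast
    ring

private lemma sum_sq_c (z : ℂ) (m : ℕ) :
    (1 - z) * ∑ j ∈ range m, (j : ℂ) ^ 2 * z ^ j
      = 2 * (∑ j ∈ range m, (j : ℂ) * z ^ j) - (∑ j ∈ range m, z ^ j) + 1
        - ((m : ℂ) - 1) ^ 2 * z ^ m := by
  induction m with
  | zero => simp
  | succ m ih =>
    simp only [sum_range_succ]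
    push_cast
    linear_combination ih

private lemma key_sum (n : ℕ) (z : ℂ) (hz : z ^ n = 1) (hz1 : z ≠ 1) :
    ∑ j ∈ range n, ((j : ℂ) ^ 2 - n * j) / 2 * z ^ j = -n * z / (1 - z) ^ 2 := by
  have h1 : (1 : ℂ) - z ≠ 0 := sub_ne_zero.mpr (Ne.symm hz1)
  have hgeom : ∑ j ∈ range n, z ^ j = 0 := by
    have := geom_sum_eq hz1 n
    rw [this, hz]
    simp
  have hS := sum_id_c z n
  have hT := sum_sq_c z n
  rw [hgeom, hz] at hS hT
  have hsplit : ∑ j ∈ range n, ((j : ℂ) ^ 2 - n * j) / 2 * z ^ j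
      = (∑ j ∈ range n, (j : ℂ) ^ 2 * z ^ j) / 2
        - (n : ℂ) / 2 * ∑ j ∈ range n, (j : ℂ) * z ^ j := by
    rw [sum_div, mul_sum, ← sum_sub_distrib]
    exact sum_congr rfl fun j _ => by ring
  rw [hsplit, eq_div_iff (pow_ne_zero 2 h1)]
  linear_combination ((1 - z) / 2) * hT + (1 - (n : ℂ) * (1 - z) / 2) * hS

private lemma perk (n k : ℕ) (hn : 1 ≤ n) (hk1 : 1 ≤ k) (hk2 : k < n) :
    ((1 / Real.sin (Real.pi * k / n) ^ 2 : ℝ) : ℂ)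
      = (4 / n) * ∑ j ∈ range n,
          ((j : ℂ) ^ 2 - n * j) / 2 * (Complex.exp (2 * Real.pi * I / n)) ^ (k * j) := by
  have hn0 : (n : ℂ) ≠ 0 := Nat.cast_ne_zero.mpr (by omega)
  have hprim : IsPrimitiveRoot (Complex.exp (2 * Real.pi * I / n)) n :=
    Complex.isPrimitiveRoot_exp n (by omega)
  set ω := Complex.exp (2 * Real.pi * I / n) with hω
  set z := ω ^ k with hzdef
  have hzn : z ^ n = 1 := by
    rw [hzdef, ← pow_mul, mul_comm, pow_mul, hprim.pow_eq_one, one_pow]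
  have hz1 : z ≠ 1 := hprim.pow_ne_one_of_pos_of_lt (by omega) hk2
  have h1z : (1 : ℂ) - z ≠ 0 := sub_ne_zero.mpr (Ne.symm hz1)
  -- relate sin to z
  set w := Complex.exp ((Real.pi : ℂ) * k / n * I) with hwdef
  have hw0 : w ≠ 0 := Complex.exp_ne_zero _
  have hwz : w ^ 2 = z := by
    rw [hwdef, hzdef, hω, ← Complex.exp_nat_mul, ← Complex.exp_nat_mul]
    congr 1
    push_cast
    field_simp
  have hz0 : z ≠ 0 := by rw [← hwz]; exact pow_ne_zero 2 hw0
  have hsin : ((Real.sin (Real.pi * k / n) : ℝ) : ℂ) = (w⁻¹ - w) * I / 2 := by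
    rw [Complex.ofReal_sin, Complex.sin, hwdef, ← Complex.exp_neg]
    push_cast
    ring_nf
  have hsinsq : ((Real.sin (Real.pi * k / n) : ℝ) : ℂ) ^ 2 = -(1 - z) ^ 2 / (4 * z) := by
    rw [hsin, ← hwz]
    field_simp
    ring_nf
    simp [Complex.I_sq]
    ring
  -- compute the sum
  have hsum : ∑ j ∈ range n, ((j : ℂ) ^ 2 - n * j) / 2 * ω ^ (k * j)
      = -n * z / (1 - z) ^ 2 := by
    rw [← key_sum n z hzn hz1]
    exact sum_congr rfl fun j _ => by rw [hzdef, ← pow_mul]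
  rw [hsum, Complex.ofReal_div, Complex.ofReal_one, Complex.ofReal_pow, hsinsq]
  field_simp

private lemma inner_geom (n : ℕ) (hn : 1 ≤ n) (y : ℂ) (hy : y ^ n = 1) (hy1 : y ≠ 1) :
    ∑ k ∈ Icc 1 (n - 1), y ^ k = -1 := by
  have h0 : ∑ k ∈ range n, y ^ k = 0 := by
    rw [geom_sum_eq hy1 n, hy]; simp
  have hIcc : Icc 1 (n - 1) = Ico 1 n := by
    rw [← Finset.Ico_add_one_right_eq_Icc]; congr 1; omega
  rw [range_eq_Ico, Finset.sum_eq_sum_Ico_succ_bot (show 0 < n by omega)] at h0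
  rw [hIcc]
  simp only [pow_zero] at h0
  linear_combination h0

private lemma sum_poly (a : ℂ) (m : ℕ) :
    ∑ j ∈ range m, ((j : ℂ) ^ 2 - a * j) / 2
      = ((m : ℂ) - 1) * m * (2 * m - 1) / 12 - a * m * ((m : ℂ) - 1) / 4 := by
  induction m with
  | zero => norm_num
  | succ m ih =>
    rw [sum_range_succ]
    push_cast
    linear_combination ih

theorem zeta_cycle_one (n : ℕ) (hn : 1 ≤ n) :
    (1 / 4 : ℝ) * ∑ k ∈ Finset.Icc 1 (n - 1), 1 / Real.sin (Real.pi * k / n) ^ 2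
      = ((n : ℝ) ^ 2 - 1) / 12 := by
  have hn0 : (n : ℂ) ≠ 0 := Nat.cast_ne_zero.mpr (by omega)
  have hprim : IsPrimitiveRoot (Complex.exp (2 * Real.pi * I / n)) n :=
    Complex.isPrimitiveRoot_exp n (by omega)
  set ω := Complex.exp (2 * Real.pi * I / n) with hω
  have hmain : ((((1 / 4 : ℝ) * ∑ k ∈ Finset.Icc 1 (n - 1),
        1 / Real.sin (Real.pi * k / n) ^ 2) : ℝ) : ℂ)
      = ((((n : ℝ) ^ 2 - 1) / 12 : ℝ) : ℂ) := by
    rw [Complex.ofReal_mul, Complex.ofReal_sum]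
    have hrw : ∑ k ∈ Icc 1 (n - 1), ((1 / Real.sin (Real.pi * k / n) ^ 2 : ℝ) : ℂ)
        = ∑ k ∈ Icc 1 (n - 1), (4 / (n : ℂ)) *
            ∑ j ∈ range n, ((j : ℂ) ^ 2 - n * j) / 2 * ω ^ (k * j) := by
      refine Finset.sum_congr rfl fun k hk => ?_
      rw [Finset.mem_Icc] at hk
      exact perk n k hn hk.1 (by omega)
    rw [hrw]
    have hswap : ∑ k ∈ Icc 1 (n - 1), (4 / (n : ℂ)) *
          ∑ j ∈ range n, ((j : ℂ) ^ 2 - n * j) / 2 * ω ^ (k * j)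
        = (4 / (n : ℂ)) * ∑ j ∈ range n,
            ((j : ℂ) ^ 2 - n * j) / 2 * ∑ k ∈ Icc 1 (n - 1), (ω ^ j) ^ k := by
      rw [← mul_sum, sum_comm]
      congr 1
      refine sum_congr rfl fun j _ => ?_
      rw [← mul_sum]
      refine congrArg _ (sum_congr rfl fun k _ => ?_)
      rw [← pow_mul, Nat.mul_comm]
    rw [hswap]
    have hinner : ∀ j ∈ range n,
        ((j : ℂ) ^ 2 - n * j) / 2 * ∑ k ∈ Icc 1 (n - 1), (ω ^ j) ^ k
          = -(((j : ℂ) ^ 2 - n * j) / 2) := by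
      intro j hj
      rw [mem_range] at hj
      rcases Nat.eq_zero_or_pos j with hj0 | hj0
      · subst hj0; simp
      · rw [inner_geom n hn (ω ^ j) (by rw [← pow_mul, mul_comm, pow_mul, hprim.pow_eq_one, one_pow])
          (hprim.pow_ne_one_of_pos_of_lt hj0.ne' hj)]
        ring
    rw [Finset.sum_congr rfl hinner, sum_neg_distrib, sum_poly]
    push_cast
    field_simp
    ring
  exact_mod_cast hmain
end
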